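/- arXiv:1411.5229 — 5 statements merged into one kernel-verified Lean document; each statement's English description precedes it below -/
import Mathlib

section
/- Suppose 0 < α ≤ 1. For every y ∈ U and all 0 ≤ x₁ ≤ x₂ ≤ h, |(Ay)(x₁) − (Ay)(x₂) + T(x₂) − T(x₁)| ≤ (2M / (ρ^α Γ(α+1))) (x₂^ρ − x₁^ρ)^α. -/
open Set MeasureTheory intervalIntegral Filter

lemma phi_hasDeriv (ρ α c : ℝ) (hρ : 0 < ρ) (hα : 0 < α) (t : ℝ) (ht : 0 < t) (htc : t ^ ρ < c) :
    HasDerivAt (fun s : ℝ => -(c - s ^ ρ) ^ α / (ρ * α))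
      ((c - t ^ ρ) ^ (α - 1) * t ^ (ρ - 1)) t := by
  have h1 : HasDerivAt (fun s : ℝ => s ^ ρ) (ρ * t ^ (ρ - 1)) t :=
    Real.hasDerivAt_rpow_const (Or.inl ht.ne')
  have h2 : HasDerivAt (fun s : ℝ => c - s ^ ρ) (-(ρ * t ^ (ρ - 1))) t := h1.const_sub c
  have h3 : HasDerivAt (fun v : ℝ => v ^ α) (α * (c - t ^ ρ) ^ (α - 1)) (c - t ^ ρ) :=
    Real.hasDerivAt_rpow_const (Or.inl (by linarith : (0:ℝ) < c - t ^ ρ).ne')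
  have h4 := (h3.comp t h2).neg.div_const (ρ * α)
  refine h4.congr_deriv ?_
  rw [div_eq_iff (mul_pos hρ hα).ne']
  ring

lemma phi_cont (ρ α c : ℝ) (hρ : 0 < ρ) (hα : 0 < α) :
    Continuous (fun s : ℝ => -(c - s ^ ρ) ^ α / (ρ * α)) := by
  have c1 : Continuous (fun s : ℝ => s ^ ρ) :=
    continuous_iff_continuousAt.2 fun x => Real.continuousAt_rpow_const x ρ (Or.inr hρ.le)
  have c2 : Continuous (fun v : ℝ => v ^ α) :=
    continuous_iff_continuousAt.2 fun x => Real.continuousAt_rpow_const x α (Or.inr hα.le)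
  exact ((c2.comp (continuous_const.sub c1)).neg).div_const _

lemma W_nonneg (ρ α c : ℝ) {t : ℝ} (ht : 0 ≤ t) (htc : t ^ ρ ≤ c) :
    0 ≤ (c - t ^ ρ) ^ (α - 1) * t ^ (ρ - 1) :=
  mul_nonneg (Real.rpow_nonneg (by linarith) _) (Real.rpow_nonneg ht _)

lemma W_intervalIntegrable (ρ α c : ℝ) (hρ : 0 < ρ) (hα : 0 < α) {a b : ℝ}
    (ha : 0 ≤ a) (hab : a ≤ b) (hbc : b ^ ρ ≤ c) :
    IntervalIntegrable (fun t : ℝ => (c - t ^ ρ) ^ (α - 1) * t ^ (ρ - 1)) volume a b := by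
  apply intervalIntegrable_deriv_of_nonneg ((phi_cont ρ α c hρ hα).continuousOn)
  · intro t ht
    rw [min_eq_left hab, max_eq_right hab] at ht
    have ht0 : 0 < t := lt_of_le_of_lt ha ht.1
    have : t ^ ρ < c := lt_of_lt_of_le (Real.rpow_lt_rpow ht0.le ht.2 hρ) hbc
    exact phi_hasDeriv ρ α c hρ hα t ht0 this
  · intro t ht
    rw [min_eq_left hab, max_eq_right hab] at ht
    have ht0 : 0 < t := lt_of_le_of_lt ha ht.1
    have : t ^ ρ ≤ c := le_trans (Real.rpow_le_rpow ht0.le ht.2.le hρ.le) hbc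
    exact W_nonneg ρ α c ht0.le this

lemma W_integral (ρ α c : ℝ) (hρ : 0 < ρ) (hα : 0 < α) {a b : ℝ}
    (ha : 0 ≤ a) (hab : a ≤ b) (hbc : b ^ ρ ≤ c) :
    ∫ t in a..b, (c - t ^ ρ) ^ (α - 1) * t ^ (ρ - 1)
      = ((c - a ^ ρ) ^ α - (c - b ^ ρ) ^ α) / (ρ * α) := by
  rw [integral_eq_sub_of_hasDeriv_right_of_le hab ((phi_cont ρ α c hρ hα).continuousOn)
      (fun t ht => by
        have ht0 : 0 < t := lt_of_le_of_lt ha ht.1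
        have : t ^ ρ < c := lt_of_lt_of_le (Real.rpow_lt_rpow ht0.le ht.2 hρ) hbc
        exact (phi_hasDeriv ρ α c hρ hα t ht0 this).hasDerivWithinAt)
      (W_intervalIntegrable ρ α c hρ hα ha hab hbc)]
  ring

lemma rpow_subadd {u v α : ℝ} (hu : 0 ≤ u) (hv : 0 ≤ v) (h0 : 0 ≤ α) (h1 : α ≤ 1) :
    (u + v) ^ α ≤ u ^ α + v ^ α := by
  rw [← Real.coe_toNNReal u hu, ← Real.coe_toNNReal v hv, ← NNReal.coe_add,
    ← NNReal.coe_rpow, ← NNReal.coe_rpow, ← NNReal.coe_rpow, ← NNReal.coe_add]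
  exact_mod_cast NNReal.rpow_add_le_add_rpow _ _ h0 h1

theorem stmt5
    (ρ α : ℝ) (hρ : 0 < ρ) (hα : 0 < α)
    (m : ℕ) (hm : m = ⌈α⌉₊)
    (y₀ : ℕ → ℝ) (K hstar : ℝ) (hK : 0 < K) (hhstar : 0 < hstar)
    (T : ℝ → ℝ)
    (hT : ∀ x : ℝ, T x = ∑ k ∈ Finset.range m, x ^ k / (Nat.factorial k) * y₀ k)
    (f : ℝ → ℝ → ℝ)
    (G : Set (ℝ × ℝ))
    (hG : G = {p : ℝ × ℝ | p.1 ∈ Set.Icc 0 hstar ∧ |p.2 - T p.1| ≤ K})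
    (hf : ContinuousOn (fun p : ℝ × ℝ => f p.1 p.2) G)
    (M : ℝ) (hM : M = sSup ((fun p : ℝ × ℝ => |f p.1 p.2|) '' G))
    (h : ℝ)
    (hh : h = if M = 0 then hstar
      else min hstar ((K * Real.Gamma (α + 1) * ρ ^ α / M) ^ (1 / α)))
    (A : (ℝ → ℝ) → ℝ → ℝ)
    (hA : ∀ (y : ℝ → ℝ) (x : ℝ), A y x = T x + ρ ^ (1 - α) / Real.Gamma α *
      ∫ t in (0:ℝ)..x, (x ^ ρ - t ^ ρ) ^ (α - 1) * t ^ (ρ - 1) * f t (y t))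
    (hα1 : α ≤ 1)
    (y : ℝ → ℝ)
    (hy : ContinuousOn y (Set.Icc 0 h) ∧ ∀ s ∈ Set.Icc 0 h, |y s - T s| ≤ K)
    (x₁ x₂ : ℝ) (h1 : 0 ≤ x₁) (h12 : x₁ ≤ x₂) (h2 : x₂ ≤ h) :
    |A y x₁ - A y x₂ + T x₂ - T x₁| ≤
      2 * M / (ρ ^ α * Real.Gamma (α + 1)) * (x₂ ^ ρ - x₁ ^ ρ) ^ α := by
  obtain ⟨hyc, hyK⟩ := hy
  have hΓ : 0 < Real.Gamma α := Real.Gamma_pos_of_pos hα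
  have hρα : 0 < ρ ^ α := Real.rpow_pos_of_pos hρ α
  have hc0 : 0 < ρ ^ (1 - α) / Real.Gamma α := div_pos (Real.rpow_pos_of_pos hρ _) hΓ
  have hx1h : x₁ ≤ h := h12.trans h2
  have hx20 : 0 ≤ x₂ := h1.trans h12
  have hhh : h ≤ hstar := by
    rw [hh]; split_ifs
    · exact le_rfl
    · exact min_le_left _ _
  -- continuity of T
  have hTc : Continuous T := by
    have : T = fun x => ∑ k ∈ Finset.range m, x ^ k / (Nat.factorial k) * y₀ k := funext hT
    rw [this]
    exact continuous_finset_sum _ fun k _ => by fun_prop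
  -- compactness of G
  have hGeq : G = (fun p : ℝ × ℝ => (p.1, p.2 + T p.1)) '' (Set.Icc 0 hstar ×ˢ Set.Icc (-K) K) := by
    ext p
    simp only [hG, Set.mem_setOf_eq, Set.mem_image, Set.mem_prod, Set.mem_Icc, Prod.exists]
    constructor
    · rintro ⟨hp1, hp2⟩
      rw [abs_le] at hp2
      exact ⟨p.1, p.2 - T p.1, ⟨hp1, hp2⟩, by simp⟩
    · rintro ⟨q1, q2, ⟨hq1, hq2⟩, rfl⟩
      exact ⟨hq1, by rw [abs_le]; simpa using hq2⟩
  have hGcomp : IsCompact G := by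
    rw [hGeq]
    exact (isCompact_Icc.prod isCompact_Icc).image
      (continuous_fst.prodMk (continuous_snd.add (hTc.comp continuous_fst)))
  have hBdd : BddAbove ((fun p : ℝ × ℝ => |f p.1 p.2|) '' G) :=
    hGcomp.bddAbove_image hf.abs
  have hmemG : ∀ t ∈ Set.Icc 0 h, (t, y t) ∈ G := fun t ht => by
    rw [hG]; exact ⟨⟨ht.1, ht.2.trans hhh⟩, hyK t ht⟩
  have hMb : ∀ t ∈ Set.Icc 0 h, |f t (y t)| ≤ M := fun t ht => by
    rw [hM]; exact le_csSup hBdd ⟨(t, y t), hmemG t ht, rfl⟩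
  have hM0 : 0 ≤ M := by
    have h0T : ((0:ℝ), T 0) ∈ G := by rw [hG]; exact ⟨⟨le_rfl, hhstar.le⟩, by simp [hK.le]⟩
    have := le_csSup hBdd ⟨((0:ℝ), T 0), h0T, rfl⟩
    rw [← hM] at this
    exact le_trans (abs_nonneg _) this
  -- continuity of g
  have hgc : ContinuousOn (fun t => f t (y t)) (Set.Icc 0 h) :=
    hf.comp (continuousOn_id.prodMk hyc) hmemG
  -- basic rpow facts
  have hab : x₁ ^ ρ ≤ x₂ ^ ρ := Real.rpow_le_rpow h1 h12 hρ.le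
  -- integrability facts
  have hW1i := W_intervalIntegrable ρ α (x₁ ^ ρ) hρ hα le_rfl h1 le_rfl
  have hW2ia := W_intervalIntegrable ρ α (x₂ ^ ρ) hρ hα le_rfl h1 hab
  have hW2ib := W_intervalIntegrable ρ α (x₂ ^ ρ) hρ hα h1 h12 le_rfl
  have hg1 : ContinuousOn (fun t => f t (y t)) (Set.uIcc 0 x₁) := by
    rw [Set.uIcc_of_le h1]; exact hgc.mono (Set.Icc_subset_Icc le_rfl hx1h)
  have hg2 : ContinuousOn (fun t => f t (y t)) (Set.uIcc x₁ x₂) := by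
    rw [Set.uIcc_of_le h12]; exact hgc.mono (Set.Icc_subset_Icc h1 h2)
  have hWg1 : IntervalIntegrable
      (fun t => (x₁ ^ ρ - t ^ ρ) ^ (α - 1) * t ^ (ρ - 1) * f t (y t)) volume 0 x₁ :=
    hW1i.mul_continuousOn hg1
  have hWg2a : IntervalIntegrable
      (fun t => (x₂ ^ ρ - t ^ ρ) ^ (α - 1) * t ^ (ρ - 1) * f t (y t)) volume 0 x₁ :=
    hW2ia.mul_continuousOn hg1
  have hWg2b : IntervalIntegrable
      (fun t => (x₂ ^ ρ - t ^ ρ) ^ (α - 1) * t ^ (ρ - 1) * f t (y t)) volume x₁ x₂ :=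
    hW2ib.mul_continuousOn hg2
  -- the three integrals
  set c0 := ρ ^ (1 - α) / Real.Gamma α with hc0def
  set I₁ := ∫ t in (0:ℝ)..x₁, (x₁ ^ ρ - t ^ ρ) ^ (α - 1) * t ^ (ρ - 1) * f t (y t) with hI1
  set J := ∫ t in (0:ℝ)..x₁, (x₂ ^ ρ - t ^ ρ) ^ (α - 1) * t ^ (ρ - 1) * f t (y t) with hJ
  set Kv := ∫ t in x₁..x₂, (x₂ ^ ρ - t ^ ρ) ^ (α - 1) * t ^ (ρ - 1) * f t (y t) with hKv
  have hkey : A y x₁ - A y x₂ + T x₂ - T x₁ = c0 * (I₁ - J - Kv) := by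
    have hs : J + Kv = ∫ t in (0:ℝ)..x₂,
        (x₂ ^ ρ - t ^ ρ) ^ (α - 1) * t ^ (ρ - 1) * f t (y t) :=
      intervalIntegral.integral_add_adjacent_intervals hWg2a hWg2b
    rw [hA, hA, ← hs]; ring
  -- difference of the first two
  have hJI : J - I₁ = ∫ t in (0:ℝ)..x₁,
      ((x₂ ^ ρ - t ^ ρ) ^ (α - 1) * t ^ (ρ - 1) * f t (y t)
        - (x₁ ^ ρ - t ^ ρ) ^ (α - 1) * t ^ (ρ - 1) * f t (y t)) :=
    (intervalIntegral.integral_sub hWg2a hWg1).symm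
  -- ae bound on (0, x₁)
  have hae1 : ∀ᵐ t ∂(volume.restrict (Set.uIoc 0 x₁)),
      ‖(x₂ ^ ρ - t ^ ρ) ^ (α - 1) * t ^ (ρ - 1) * f t (y t)
        - (x₁ ^ ρ - t ^ ρ) ^ (α - 1) * t ^ (ρ - 1) * f t (y t)‖ ≤
      ((x₁ ^ ρ - t ^ ρ) ^ (α - 1) * t ^ (ρ - 1)
        - (x₂ ^ ρ - t ^ ρ) ^ (α - 1) * t ^ (ρ - 1)) * M := by
    have hne : ∀ᵐ t : ℝ, t ≠ x₁ := by
      rw [MeasureTheory.ae_iff]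
      simpa [not_not] using Real.volume_singleton (x := x₁)
    filter_upwards [hne.filter_mono (MeasureTheory.ae_mono Measure.restrict_le_self),
      MeasureTheory.ae_restrict_mem measurableSet_uIoc] with t htne htmem
    rw [Set.uIoc_of_le h1] at htmem
    have ht0 : 0 < t := htmem.1
    have htx : t < x₁ := lt_of_le_of_ne htmem.2 htne
    have hgb : |f t (y t)| ≤ M := hMb t ⟨ht0.le, (htx.le.trans h12).trans h2⟩
    have hpos1 : 0 < x₁ ^ ρ - t ^ ρ := sub_pos.2 (Real.rpow_lt_rpow ht0.le htx hρ)
    have hle2 : x₁ ^ ρ - t ^ ρ ≤ x₂ ^ ρ - t ^ ρ := by linarith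
    have hW21 : (x₂ ^ ρ - t ^ ρ) ^ (α - 1) * t ^ (ρ - 1)
        ≤ (x₁ ^ ρ - t ^ ρ) ^ (α - 1) * t ^ (ρ - 1) :=
      mul_le_mul_of_nonneg_right
        (Real.rpow_le_rpow_of_nonpos hpos1 hle2 (by linarith)) (Real.rpow_nonneg ht0.le _)
    have hW2n : 0 ≤ (x₂ ^ ρ - t ^ ρ) ^ (α - 1) * t ^ (ρ - 1) :=
      W_nonneg ρ α _ ht0.le (by linarith)
    rw [Real.norm_eq_abs, ← sub_mul, abs_mul, abs_of_nonpos (by linarith), neg_sub]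
    exact mul_le_mul_of_nonneg_left hgb (by linarith)
  have hbnd1 : |J - I₁| ≤ |∫ t in (0:ℝ)..x₁,
      ((x₁ ^ ρ - t ^ ρ) ^ (α - 1) * t ^ (ρ - 1)
        - (x₂ ^ ρ - t ^ ρ) ^ (α - 1) * t ^ (ρ - 1)) * M| := by
    rw [hJI, ← Real.norm_eq_abs]
    exact intervalIntegral.norm_integral_le_abs_of_norm_le hae1 ((hW1i.sub hW2ia).mul_const M)
  -- ae bound on (x₁, x₂)
  have hae2 : ∀ᵐ t ∂(volume.restrict (Set.uIoc x₁ x₂)),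
      ‖(x₂ ^ ρ - t ^ ρ) ^ (α - 1) * t ^ (ρ - 1) * f t (y t)‖ ≤
      ((x₂ ^ ρ - t ^ ρ) ^ (α - 1) * t ^ (ρ - 1)) * M := by
    filter_upwards [MeasureTheory.ae_restrict_mem measurableSet_uIoc] with t htmem
    rw [Set.uIoc_of_le h12] at htmem
    have ht0 : 0 < t := lt_of_le_of_lt h1 htmem.1
    have htx : t ≤ x₂ := htmem.2
    have hgb : |f t (y t)| ≤ M := hMb t ⟨ht0.le, htx.trans h2⟩
    have hW2n : 0 ≤ (x₂ ^ ρ - t ^ ρ) ^ (α - 1) * t ^ (ρ - 1) :=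
      W_nonneg ρ α _ ht0.le (Real.rpow_le_rpow ht0.le htx hρ.le)
    rw [Real.norm_eq_abs, abs_mul, abs_of_nonneg hW2n]
    exact mul_le_mul_of_nonneg_left hgb hW2n
  have hbnd2 : |Kv| ≤ |∫ t in x₁..x₂,
      ((x₂ ^ ρ - t ^ ρ) ^ (α - 1) * t ^ (ρ - 1)) * M| := by
    rw [hKv, ← Real.norm_eq_abs]
    exact intervalIntegral.norm_integral_le_abs_of_norm_le hae2 (hW2ib.mul_const M)
  -- compute the two bounding integrals
  have hv1 : ∫ t in (0:ℝ)..x₁,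
      ((x₁ ^ ρ - t ^ ρ) ^ (α - 1) * t ^ (ρ - 1)
        - (x₂ ^ ρ - t ^ ρ) ^ (α - 1) * t ^ (ρ - 1)) * M
      = ((x₁ ^ ρ) ^ α - ((x₂ ^ ρ) ^ α - (x₂ ^ ρ - x₁ ^ ρ) ^ α)) / (ρ * α) * M := by
    rw [intervalIntegral.integral_mul_const, intervalIntegral.integral_sub hW1i hW2ia,
      W_integral ρ α _ hρ hα le_rfl h1 le_rfl, W_integral ρ α _ hρ hα le_rfl h1 hab]
    simp only [Real.zero_rpow hρ.ne', sub_zero, sub_self, Real.zero_rpow hα.ne']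
    ring
  have hv2 : ∫ t in x₁..x₂, ((x₂ ^ ρ - t ^ ρ) ^ (α - 1) * t ^ (ρ - 1)) * M
      = (x₂ ^ ρ - x₁ ^ ρ) ^ α / (ρ * α) * M := by
    rw [intervalIntegral.integral_mul_const, W_integral ρ α _ hρ hα h1 h12 le_rfl]
    simp only [sub_self, Real.zero_rpow hα.ne', sub_zero]
  -- numeric bounds
  have hba : 0 ≤ x₂ ^ ρ - x₁ ^ ρ := by linarith
  have hbaα : 0 ≤ (x₂ ^ ρ - x₁ ^ ρ) ^ α := Real.rpow_nonneg hba α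
  have hsubadd : (x₂ ^ ρ) ^ α ≤ (x₁ ^ ρ) ^ α + (x₂ ^ ρ - x₁ ^ ρ) ^ α := by
    have := rpow_subadd (Real.rpow_nonneg h1 ρ) hba hα.le hα1
    have he : x₁ ^ ρ + (x₂ ^ ρ - x₁ ^ ρ) = x₂ ^ ρ := by ring
    rwa [he] at this
  have haα : (x₁ ^ ρ) ^ α ≤ (x₂ ^ ρ) ^ α :=
    Real.rpow_le_rpow (Real.rpow_nonneg h1 ρ) hab hα.le
  have habs1 : |(x₁ ^ ρ) ^ α - ((x₂ ^ ρ) ^ α - (x₂ ^ ρ - x₁ ^ ρ) ^ α)|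
      ≤ (x₂ ^ ρ - x₁ ^ ρ) ^ α :=
    abs_le.2 ⟨by linarith, by linarith⟩
  have hρα' : 0 < ρ * α := mul_pos hρ hα
  -- put everything together
  have main : |A y x₁ - A y x₂ + T x₂ - T x₁|
      ≤ c0 * (2 * ((x₂ ^ ρ - x₁ ^ ρ) ^ α / (ρ * α) * M)) := by
    rw [hkey, abs_mul, abs_of_pos hc0]
    refine mul_le_mul_of_nonneg_left ?_ hc0.le
    calc |I₁ - J - Kv| ≤ |J - I₁| + |Kv| := by
          rw [abs_sub_comm J I₁]  -- no-op helper
          have : I₁ - J - Kv = (I₁ - J) + (-Kv) := by ring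
          rw [this]
          exact (abs_add_le _ _).trans (by rw [abs_neg, abs_sub_comm])
      _ ≤ |((x₁ ^ ρ) ^ α - ((x₂ ^ ρ) ^ α - (x₂ ^ ρ - x₁ ^ ρ) ^ α)) / (ρ * α) * M|
            + |(x₂ ^ ρ - x₁ ^ ρ) ^ α / (ρ * α) * M| := by
          refine add_le_add ?_ ?_
          · rw [← hv1]; exact hbnd1
          · rw [← hv2]; exact hbnd2
      _ ≤ (x₂ ^ ρ - x₁ ^ ρ) ^ α / (ρ * α) * M
            + (x₂ ^ ρ - x₁ ^ ρ) ^ α / (ρ * α) * M := by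
          refine add_le_add ?_ ?_
          · rw [abs_mul, abs_of_nonneg hM0, abs_div, abs_of_pos hρα']
            gcongr
          · rw [abs_of_nonneg (by positivity)]
      _ = 2 * ((x₂ ^ ρ - x₁ ^ ρ) ^ α / (ρ * α) * M) := by ring
  refine main.trans (le_of_eq ?_)
  rw [hc0def, Real.Gamma_add_one hα.ne']
  have hrw : ρ ^ (1 - α) = ρ / ρ ^ α := by
    rw [Real.rpow_sub hρ, Real.rpow_one]
  rw [hrw]
  field_simp
end

section
/- Suppose α > 1. For every y ∈ U and all 0 ≤ x₁ ≤ x₂ ≤ h, |(Ay)(x₁) − (Ay)(x₂) + T(x₂) − T(x₁)| ≤ (M / (ρ^α Γ(α+1))) [(x₂^ρ − x₁^ρ)^α + x₂^{ρα} − x₁^{ρα}]. -/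
open Set MeasureTheory intervalIntegral Filter

set_option maxHeartbeats 1000000

/-- Kernel integrability with a continuous-on factor. -/
lemma kint {ρ α : ℝ} (hρ : 0 < ρ) (hα1 : 1 < α) (X h' : ℝ) {F : ℝ → ℝ}
    (hF : ContinuousOn F (Set.Icc 0 h')) {a b : ℝ} (ha : 0 ≤ a) (hab : a ≤ b) (hb : b ≤ h') :
    IntervalIntegrable (fun t => (X - t ^ ρ) ^ (α - 1) * t ^ (ρ - 1) * F t) volume a b := by
  have h1 : IntervalIntegrable (fun t : ℝ => t ^ (ρ - 1)) volume a b :=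
    intervalIntegral.intervalIntegrable_rpow' (by linarith)
  have hker : Continuous fun t : ℝ => (X - t ^ ρ) ^ (α - 1) :=
    (Real.continuous_rpow_const (by linarith)).comp
      (continuous_const.sub (Real.continuous_rpow_const hρ.le))
  have hsub : Set.uIcc a b ⊆ Set.Icc 0 h' := by
    rw [Set.uIcc_of_le hab]; exact Set.Icc_subset_Icc ha hb
  have h2 : ContinuousOn (fun t => (X - t ^ ρ) ^ (α - 1) * F t) (Set.uIcc a b) :=
    hker.continuousOn.mul (hF.mono hsub)
  have heq : (fun t => (X - t ^ ρ) ^ (α - 1) * t ^ (ρ - 1) * F t)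
      = fun t => t ^ (ρ - 1) * ((X - t ^ ρ) ^ (α - 1) * F t) := by funext t; ring
  rw [heq]
  exact h1.mul_continuousOn h2

/-- Pure kernel integrability. -/
lemma kint0 {ρ α : ℝ} (hρ : 0 < ρ) (hα1 : 1 < α) (X : ℝ) (a b : ℝ) :
    IntervalIntegrable (fun t => (X - t ^ ρ) ^ (α - 1) * t ^ (ρ - 1)) volume a b := by
  have h1 : IntervalIntegrable (fun t : ℝ => t ^ (ρ - 1)) volume a b :=
    intervalIntegral.intervalIntegrable_rpow' (by linarith)
  have hker : Continuous fun t : ℝ => (X - t ^ ρ) ^ (α - 1) :=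
    (Real.continuous_rpow_const (by linarith)).comp
      (continuous_const.sub (Real.continuous_rpow_const hρ.le))
  exact h1.continuousOn_mul hker.continuousOn

/-- Value of the kernel integral. -/
lemma kval {ρ α : ℝ} (hρ : 0 < ρ) (hα1 : 1 < α) (X : ℝ) {a b : ℝ} (ha : 0 ≤ a) (hab : a ≤ b) :
    ∫ t in a..b, (X - t ^ ρ) ^ (α - 1) * t ^ (ρ - 1)
      = ((X - a ^ ρ) ^ α - (X - b ^ ρ) ^ α) / (ρ * α) := by
  have hα0 : (0:ℝ) < α := by linarith
  set φ : ℝ → ℝ := fun t => -(X - t ^ ρ) ^ α / (ρ * α) with hφ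
  have hc : Continuous φ := by
    exact (((Real.continuous_rpow_const hα0.le).comp
      (continuous_const.sub (Real.continuous_rpow_const hρ.le))).neg).div_const _
  have hd : ∀ t ∈ Set.Ioo a b, HasDerivAt φ ((X - t ^ ρ) ^ (α - 1) * t ^ (ρ - 1)) t := by
    intro t ht
    have ht0 : 0 < t := lt_of_le_of_lt ha ht.1
    have hin : HasDerivAt (fun t : ℝ => X - t ^ ρ) (-(ρ * t ^ (ρ - 1))) t :=
      (Real.hasDerivAt_rpow_const (Or.inl ht0.ne')).const_sub X
    have hout : HasDerivAt (fun u : ℝ => u ^ α) (α * (X - t ^ ρ) ^ (α - 1)) (X - t ^ ρ) :=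
      Real.hasDerivAt_rpow_const (Or.inr hα1.le)
    have hcomp := (hout.comp t hin).neg.div_const (ρ * α)
    have hval : (X - t ^ ρ) ^ (α - 1) * t ^ (ρ - 1)
        = -(α * (X - t ^ ρ) ^ (α - 1) * -(ρ * t ^ (ρ - 1))) / (ρ * α) := by
      rw [eq_div_iff (mul_pos hρ hα0).ne']
      ring
    rw [hval]; exact hcomp
  rw [intervalIntegral.integral_eq_sub_of_hasDerivAt_of_le hab hc.continuousOn hd
    (kint0 hρ hα1 X a b)]
  simp only [hφ]
  field_simp
  ring

theorem stmt6
    (ρ α : ℝ) (hρ : 0 < ρ) (hα : 0 < α)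
    (m : ℕ) (hm : m = ⌈α⌉₊)
    (y₀ : ℕ → ℝ) (K hstar : ℝ) (hK : 0 < K) (hhstar : 0 < hstar)
    (T : ℝ → ℝ)
    (hT : ∀ x : ℝ, T x = ∑ k ∈ Finset.range m, x ^ k / (Nat.factorial k) * y₀ k)
    (f : ℝ → ℝ → ℝ)
    (G : Set (ℝ × ℝ))
    (hG : G = {p : ℝ × ℝ | p.1 ∈ Set.Icc 0 hstar ∧ |p.2 - T p.1| ≤ K})
    (hf : ContinuousOn (fun p : ℝ × ℝ => f p.1 p.2) G)
    (M : ℝ) (hM : M = sSup ((fun p : ℝ × ℝ => |f p.1 p.2|) '' G))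
    (h : ℝ)
    (hh : h = if M = 0 then hstar
      else min hstar ((K * Real.Gamma (α + 1) * ρ ^ α / M) ^ (1 / α)))
    (A : (ℝ → ℝ) → ℝ → ℝ)
    (hA : ∀ (y : ℝ → ℝ) (x : ℝ), A y x = T x + ρ ^ (1 - α) / Real.Gamma α *
      ∫ t in (0:ℝ)..x, (x ^ ρ - t ^ ρ) ^ (α - 1) * t ^ (ρ - 1) * f t (y t))
    (hα1 : 1 < α)
    (y : ℝ → ℝ)
    (hy : ContinuousOn y (Set.Icc 0 h) ∧ ∀ s ∈ Set.Icc 0 h, |y s - T s| ≤ K)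
    (x₁ x₂ : ℝ) (h1 : 0 ≤ x₁) (h12 : x₁ ≤ x₂) (h2 : x₂ ≤ h) :
    |A y x₁ - A y x₂ + T x₂ - T x₁| ≤
      M / (ρ ^ α * Real.Gamma (α + 1)) *
        ((x₂ ^ ρ - x₁ ^ ρ) ^ α + x₂ ^ (ρ * α) - x₁ ^ (ρ * α)) := by
  -- Basic facts
  have hx20 : (0:ℝ) ≤ x₂ := le_trans h1 h12
  have hhle : h ≤ hstar := by
    rw [hh]; split_ifs
    · exact le_refl _
    · exact min_le_left _ _
  have hx1h : x₁ ≤ h := le_trans h12 h2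
  -- Continuity of T
  have hTc : Continuous T := by
    have : T = fun x => ∑ k ∈ Finset.range m, x ^ k / (Nat.factorial k) * y₀ k := funext hT
    rw [this]
    exact continuous_finset_sum _ fun i _ => by fun_prop
  -- G is compact
  have hGeq : G = (fun q : ℝ × ℝ => (q.1, T q.1 + q.2)) ''
      (Set.Icc 0 hstar ×ˢ Set.Icc (-K) K) := by
    rw [hG]; ext p
    simp only [Set.mem_image, Set.mem_setOf_eq, Set.mem_prod, Set.mem_Icc]
    constructor
    · rintro ⟨hp1, hp2⟩
      rw [abs_le] at hp2
      exact ⟨(p.1, p.2 - T p.1), ⟨Set.mem_Icc.mp hp1, hp2.1, hp2.2⟩, by simp⟩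
    · rintro ⟨q, ⟨hq1, hq2, hq3⟩, rfl⟩
      refine ⟨Set.mem_Icc.mpr hq1, ?_⟩
      simp only [add_sub_cancel_left]
      exact abs_le.mpr ⟨hq2, hq3⟩
  have hGcomp : IsCompact G := by
    rw [hGeq]
    exact (isCompact_Icc.prod isCompact_Icc).image
      (continuous_fst.prodMk ((hTc.comp continuous_fst).add continuous_snd))
  -- M bounds |f| on G
  have hbdd : BddAbove ((fun p : ℝ × ℝ => |f p.1 p.2|) '' G) :=
    (hGcomp.image_of_continuousOn hf.abs).bddAbove
  have hMb : ∀ p ∈ G, |f p.1 p.2| ≤ M := fun p hp => hM ▸ le_csSup hbdd ⟨p, hp, rfl⟩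
  have hM0 : 0 ≤ M := by
    rw [hM]
    exact Real.sSup_nonneg (by rintro x ⟨p, _, rfl⟩; positivity)
  -- y stays in G
  have hyG : ∀ t ∈ Set.Icc 0 h, (t, y t) ∈ G := by
    intro t ht
    rw [hG]
    exact ⟨Set.mem_Icc.mpr ⟨ht.1, le_trans ht.2 hhle⟩, hy.2 t ht⟩
  set F : ℝ → ℝ := fun t => f t (y t) with hF
  have hFc : ContinuousOn F (Set.Icc 0 h) := by
    have : F = (fun p : ℝ × ℝ => f p.1 p.2) ∘ fun t => (t, y t) := rfl
    rw [this]
    exact hf.comp (continuousOn_id.prodMk hy.1) hyG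
  have hFb : ∀ t ∈ Set.Icc 0 h, |F t| ≤ M := fun t ht => hMb (t, y t) (hyG t ht)
  set X₁ : ℝ := x₁ ^ ρ with hX₁
  set X₂ : ℝ := x₂ ^ ρ with hX₂
  have hX12 : X₁ ≤ X₂ := Real.rpow_le_rpow h1 h12 hρ.le
  have hX10 : 0 ≤ X₁ := Real.rpow_nonneg h1 _
  -- integrabilities
  have iA : IntervalIntegrable (fun t => (X₁ - t ^ ρ) ^ (α - 1) * t ^ (ρ - 1) * F t)
      volume 0 x₁ := kint hρ hα1 X₁ h hFc le_rfl h1 hx1h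
  have iB : IntervalIntegrable (fun t => (X₂ - t ^ ρ) ^ (α - 1) * t ^ (ρ - 1) * F t)
      volume 0 x₁ := kint hρ hα1 X₂ h hFc le_rfl h1 hx1h
  have iC : IntervalIntegrable (fun t => (X₂ - t ^ ρ) ^ (α - 1) * t ^ (ρ - 1) * F t)
      volume x₁ x₂ := kint hρ hα1 X₂ h hFc h1 h12 h2
  have jA := kint0 hρ hα1 X₁ 0 x₁
  have jB := kint0 hρ hα1 X₂ 0 x₁
  have jC := kint0 hρ hα1 X₂ x₁ x₂
  -- splitting
  have hsplit : (∫ t in (0:ℝ)..x₂, (X₂ - t ^ ρ) ^ (α - 1) * t ^ (ρ - 1) * F t)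
      = (∫ t in (0:ℝ)..x₁, (X₂ - t ^ ρ) ^ (α - 1) * t ^ (ρ - 1) * F t)
        + ∫ t in x₁..x₂, (X₂ - t ^ ρ) ^ (α - 1) * t ^ (ρ - 1) * F t :=
    (intervalIntegral.integral_add_adjacent_intervals iB iC).symm
  set c : ℝ := ρ ^ (1 - α) / Real.Gamma α with hc
  have hΓ : 0 < Real.Gamma α := Real.Gamma_pos_of_pos hα
  have hc0 : 0 ≤ c := div_nonneg (Real.rpow_nonneg hρ.le _) hΓ.le
  have hdiff : A y x₁ - A y x₂ + T x₂ - T x₁ =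
      c * ((∫ t in (0:ℝ)..x₁, (X₁ - t ^ ρ) ^ (α - 1) * t ^ (ρ - 1) * F t)
        - ∫ t in (0:ℝ)..x₂, (X₂ - t ^ ρ) ^ (α - 1) * t ^ (ρ - 1) * F t) := by
    rw [hA y x₁, hA y x₂]; ring
  -- first bound
  have hB1 : |(∫ t in (0:ℝ)..x₁, (X₁ - t ^ ρ) ^ (α - 1) * t ^ (ρ - 1) * F t)
      - ∫ t in (0:ℝ)..x₁, (X₂ - t ^ ρ) ^ (α - 1) * t ^ (ρ - 1) * F t|
      ≤ ∫ t in (0:ℝ)..x₁,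
        ((X₂ - t ^ ρ) ^ (α - 1) * t ^ (ρ - 1) - (X₁ - t ^ ρ) ^ (α - 1) * t ^ (ρ - 1)) * M := by
    rw [← intervalIntegral.integral_sub iA iB]
    refine le_trans (intervalIntegral.abs_integral_le_integral_abs h1) ?_
    refine intervalIntegral.integral_mono_on h1 (iA.sub iB).abs ((jB.sub jA).mul_const M) ?_
    intro t ht
    have ht0 : 0 ≤ t := ht.1
    have htρ : t ^ ρ ≤ X₁ := Real.rpow_le_rpow ht0 ht.2 hρ.le
    have hkle : (X₁ - t ^ ρ) ^ (α - 1) ≤ (X₂ - t ^ ρ) ^ (α - 1) :=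
      Real.rpow_le_rpow (by linarith) (by linarith) (by linarith)
    have htpow : (0:ℝ) ≤ t ^ (ρ - 1) := Real.rpow_nonneg ht0 _
    have hknn : (0:ℝ) ≤ (X₂ - t ^ ρ) ^ (α - 1) * t ^ (ρ - 1)
        - (X₁ - t ^ ρ) ^ (α - 1) * t ^ (ρ - 1) := by
      nlinarith [mul_le_mul_of_nonneg_right hkle htpow]
    have hFbt : |F t| ≤ M := hFb t ⟨ht0, le_trans ht.2 hx1h⟩
    have : (X₁ - t ^ ρ) ^ (α - 1) * t ^ (ρ - 1) * F t
        - (X₂ - t ^ ρ) ^ (α - 1) * t ^ (ρ - 1) * F t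
        = ((X₁ - t ^ ρ) ^ (α - 1) * t ^ (ρ - 1) - (X₂ - t ^ ρ) ^ (α - 1) * t ^ (ρ - 1)) * F t := by
      ring
    rw [this, abs_mul, abs_sub_comm, abs_of_nonneg hknn]
    exact mul_le_mul_of_nonneg_left hFbt hknn
  -- second bound
  have hB2 : |∫ t in x₁..x₂, (X₂ - t ^ ρ) ^ (α - 1) * t ^ (ρ - 1) * F t|
      ≤ ∫ t in x₁..x₂, (X₂ - t ^ ρ) ^ (α - 1) * t ^ (ρ - 1) * M := by
    refine le_trans (intervalIntegral.abs_integral_le_integral_abs h12) ?_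
    refine intervalIntegral.integral_mono_on h12 iC.abs (jC.mul_const M) ?_
    intro t ht
    have ht0 : 0 ≤ t := le_trans h1 ht.1
    have htρ : t ^ ρ ≤ X₂ := Real.rpow_le_rpow ht0 ht.2 hρ.le
    have hknn : (0:ℝ) ≤ (X₂ - t ^ ρ) ^ (α - 1) * t ^ (ρ - 1) :=
      mul_nonneg (Real.rpow_nonneg (by linarith) _) (Real.rpow_nonneg ht0 _)
    have hFbt : |F t| ≤ M := hFb t ⟨ht0, le_trans ht.2 h2⟩
    rw [abs_mul, abs_of_nonneg hknn]
    exact mul_le_mul_of_nonneg_left hFbt hknn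
  -- compute bound integrals
  have hα0' : α ≠ 0 := hα.ne'
  have hv1 : (∫ t in (0:ℝ)..x₁, (X₁ - t ^ ρ) ^ (α - 1) * t ^ (ρ - 1)) = X₁ ^ α / (ρ * α) := by
    rw [kval hρ hα1 X₁ le_rfl h1]
    rw [Real.zero_rpow hρ.ne']
    simp [Real.zero_rpow hα0']
    rw [← hX₁]; simp [Real.zero_rpow hα0']
  have hv2 : (∫ t in (0:ℝ)..x₁, (X₂ - t ^ ρ) ^ (α - 1) * t ^ (ρ - 1))
      = (X₂ ^ α - (X₂ - X₁) ^ α) / (ρ * α) := by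
    rw [kval hρ hα1 X₂ le_rfl h1]
    rw [Real.zero_rpow hρ.ne']
    simp
    rw [← hX₁]
  have hv3 : (∫ t in x₁..x₂, (X₂ - t ^ ρ) ^ (α - 1) * t ^ (ρ - 1))
      = (X₂ - X₁) ^ α / (ρ * α) := by
    rw [kval hρ hα1 X₂ h1 h12]
    rw [← hX₁, ← hX₂]; simp [Real.zero_rpow hα0']
  have hI1 : (∫ t in (0:ℝ)..x₁,
      ((X₂ - t ^ ρ) ^ (α - 1) * t ^ (ρ - 1) - (X₁ - t ^ ρ) ^ (α - 1) * t ^ (ρ - 1)) * M)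
      = ((X₂ ^ α - (X₂ - X₁) ^ α) / (ρ * α) - X₁ ^ α / (ρ * α)) * M := by
    rw [intervalIntegral.integral_mul_const, intervalIntegral.integral_sub jB jA, hv1, hv2]
  have hI2 : (∫ t in x₁..x₂, (X₂ - t ^ ρ) ^ (α - 1) * t ^ (ρ - 1) * M)
      = (X₂ - X₁) ^ α / (ρ * α) * M := by
    rw [intervalIntegral.integral_mul_const, hv3]
  -- put things together
  have hchain : |A y x₁ - A y x₂ + T x₂ - T x₁| ≤ c * ((X₂ ^ α - X₁ ^ α) / (ρ * α) * M) := by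
    rw [hdiff, hsplit, abs_mul, abs_of_nonneg hc0]
    refine mul_le_mul_of_nonneg_left ?_ hc0
    calc |(∫ t in (0:ℝ)..x₁, (X₁ - t ^ ρ) ^ (α - 1) * t ^ (ρ - 1) * F t)
        - ((∫ t in (0:ℝ)..x₁, (X₂ - t ^ ρ) ^ (α - 1) * t ^ (ρ - 1) * F t)
          + ∫ t in x₁..x₂, (X₂ - t ^ ρ) ^ (α - 1) * t ^ (ρ - 1) * F t)|
        ≤ |(∫ t in (0:ℝ)..x₁, (X₁ - t ^ ρ) ^ (α - 1) * t ^ (ρ - 1) * F t)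
            - ∫ t in (0:ℝ)..x₁, (X₂ - t ^ ρ) ^ (α - 1) * t ^ (ρ - 1) * F t|
          + |∫ t in x₁..x₂, (X₂ - t ^ ρ) ^ (α - 1) * t ^ (ρ - 1) * F t| := by
            rw [sub_add_eq_sub_sub]
            exact abs_sub (_ - _) _
      _ ≤ ((X₂ ^ α - (X₂ - X₁) ^ α) / (ρ * α) - X₁ ^ α / (ρ * α)) * M
          + (X₂ - X₁) ^ α / (ρ * α) * M := by
            rw [← hI1, ← hI2]; exact add_le_add hB1 hB2
      _ = (X₂ ^ α - X₁ ^ α) / (ρ * α) * M := by ring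
  refine le_trans hchain ?_
  -- final arithmetic
  have hΓ1 : Real.Gamma (α + 1) = α * Real.Gamma α := Real.Gamma_add_one hα0'
  have hrr : ρ ^ (1 - α) * ρ ^ α = ρ := by
    rw [← Real.rpow_add hρ]; simp
  have hρα : (0:ℝ) < ρ ^ α := Real.rpow_pos_of_pos hρ _
  have hcoef : c * ((X₂ ^ α - X₁ ^ α) / (ρ * α) * M)
      = M / (ρ ^ α * Real.Gamma (α + 1)) * (X₂ ^ α - X₁ ^ α) := by
    have hrw : ρ ^ (1 - α) = ρ / ρ ^ α := by
      rw [eq_div_iff hρα.ne']; exact hrr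
    rw [hc, hΓ1, hrw]
    field_simp
  rw [hcoef]
  have hx2a : x₂ ^ (ρ * α) = X₂ ^ α := Real.rpow_mul hx20 ρ α ▸ rfl
  have hx1a : x₁ ^ (ρ * α) = X₁ ^ α := Real.rpow_mul h1 ρ α ▸ rfl
  rw [hx2a, hx1a]
  have hcnn : 0 ≤ M / (ρ ^ α * Real.Gamma (α + 1)) := by
    apply div_nonneg hM0
    exact mul_nonneg hρα.le (Real.Gamma_pos_of_pos (by linarith)).le
  have hpow : 0 ≤ (X₂ - X₁) ^ α := Real.rpow_nonneg (by linarith) _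
  nlinarith [mul_le_mul_of_nonneg_left hpow hcnn]
end

section
/- The family A(U) := {Ay : y ∈ U} is equicontinuous on [0, h]: for every ε > 0 there exists δ > 0 (independent of y ∈ U) such that for all y ∈ U and all x₁, x₂ ∈ [0, h] with |x₁ − x₂| < δ one has |(Ay)(x₁) − (Ay)(x₂)| < ε. -/
open Set MeasureTheory intervalIntegral Filter


lemma key_img {ρ : ℝ} (hρ : 0 < ρ) {a b : ℝ} (ha : 0 ≤ a) (hab : a ≤ b) :
    (fun t : ℝ => t ^ ρ) '' Ioo a b = Ioo (a ^ ρ) (b ^ ρ) := by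
  ext u
  constructor
  · rintro ⟨t, ⟨h1, h2⟩, rfl⟩
    exact ⟨Real.rpow_lt_rpow ha h1 hρ, Real.rpow_lt_rpow (ha.trans h1.le) h2 hρ⟩
  · rintro ⟨h1, h2⟩
    have hu : 0 ≤ u := (Real.rpow_nonneg ha ρ).trans h1.le
    refine ⟨u ^ ρ⁻¹, ⟨?_, ?_⟩, Real.rpow_inv_rpow hu hρ.ne'⟩
    · have := Real.rpow_lt_rpow (Real.rpow_nonneg ha ρ) h1 (inv_pos.2 hρ)
      rwa [Real.rpow_rpow_inv ha hρ.ne'] at this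
    · have := Real.rpow_lt_rpow hu h2 (inv_pos.2 hρ)
      rwa [Real.rpow_rpow_inv (ha.trans hab) hρ.ne'] at this

lemma key_int {ρ α : ℝ} (hρ : 0 < ρ) (hα : 0 < α) {a b c : ℝ}
    (ha : 0 ≤ a) (hab : a ≤ b) (hbc : b ≤ c) :
    IntervalIntegrable (fun t => (c ^ ρ - t ^ ρ) ^ (α - 1) * t ^ (ρ - 1)) volume a b ∧
    (∫ t in a..b, (c ^ ρ - t ^ ρ) ^ (α - 1) * t ^ (ρ - 1))
      = ((c ^ ρ - a ^ ρ) ^ α - (c ^ ρ - b ^ ρ) ^ α) / (ρ * α) := by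
  set g : ℝ → ℝ := fun u => (c ^ ρ - u) ^ (α - 1) with hg
  set k : ℝ → ℝ := fun t => (c ^ ρ - t ^ ρ) ^ (α - 1) * t ^ (ρ - 1) with hk
  have hderiv : ∀ t ∈ Ioo a b, HasDerivWithinAt (fun t : ℝ => t ^ ρ)
      (ρ * t ^ (ρ - 1)) (Ioo a b) t := fun t ht =>
    (Real.hasDerivAt_rpow_const (Or.inl (ne_of_gt (lt_of_le_of_lt ha ht.1)))).hasDerivWithinAt
  have hinj : InjOn (fun t : ℝ => t ^ ρ) (Ioo a b) :=
    (Real.strictMonoOn_rpow_Ici_of_exponent_pos hρ).injOn.mono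
      (fun t ht => le_of_lt (lt_of_le_of_lt ha ht.1))
  have hab' : a ^ ρ ≤ b ^ ρ := Real.rpow_le_rpow ha hab hρ.le
  -- integrability of g on the interval
  have hgi : IntervalIntegrable g volume (a ^ ρ) (b ^ ρ) := by
    have := (intervalIntegral.intervalIntegrable_rpow' (r := α - 1)
      (by linarith)).comp_sub_left (a := c ^ ρ - b ^ ρ) (b := c ^ ρ - a ^ ρ) (c ^ ρ)
    simpa using this.symm
  have hgIoo : IntegrableOn g (Ioo (a ^ ρ) (b ^ ρ)) := by
    have := (intervalIntegrable_iff_integrableOn_Ioc_of_le hab').1 hgi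
    exact this.mono_set Ioo_subset_Ioc_self
  -- transfer integrability
  have htrans := (integrableOn_image_iff_integrableOn_abs_deriv_smul measurableSet_Ioo
    hderiv hinj g)
  rw [key_img hρ ha hab] at htrans
  have hki : IntegrableOn (fun t => |ρ * t ^ (ρ - 1)| • g (t ^ ρ)) (Ioo a b) := htrans.1 hgIoo
  have heq : EqOn (fun t => |ρ * t ^ (ρ - 1)| • g (t ^ ρ)) (fun t => ρ * k t) (Ioo a b) := by
    intro t ht
    have ht0 : 0 < t := lt_of_le_of_lt ha ht.1
    simp only [smul_eq_mul, hk, hg]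
    rw [abs_of_nonneg (by positivity)]
    ring
  have hkint : IntervalIntegrable k volume a b := by
    rw [intervalIntegrable_iff_integrableOn_Ioc_of_le hab,
      integrableOn_Ioc_iff_integrableOn_Ioo]
    have h2 : IntegrableOn (fun t => ρ * k t) (Ioo a b) :=
      hki.congr_fun heq measurableSet_Ioo
    have h3 := h2.const_mul (1 / ρ)
    have h4 : (fun x => 1 / ρ * (ρ * k x)) = k := by
      funext x; field_simp
    rwa [h4] at h3
  refine ⟨hkint, ?_⟩
  -- value
  have hval := integral_image_eq_integral_abs_deriv_smul measurableSet_Ioo hderiv hinj g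
  rw [key_img hρ ha hab] at hval
  have hLHS : ∫ u in Ioo (a ^ ρ) (b ^ ρ), g u
      = ((c ^ ρ - a ^ ρ) ^ α - (c ^ ρ - b ^ ρ) ^ α) / α := by
    rw [← integral_Ioc_eq_integral_Ioo, ← intervalIntegral.integral_of_le hab']
    rw [show (∫ u in (a ^ ρ)..(b ^ ρ), g u)
        = ∫ u in (a ^ ρ)..(b ^ ρ), (fun v : ℝ => v ^ (α - 1)) (c ^ ρ - u) from rfl]
    rw [intervalIntegral.integral_comp_sub_left (fun v : ℝ => v ^ (α - 1)) (c ^ ρ)]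
    rw [integral_rpow (Or.inl (by linarith))]
    ring_nf
  have hRHS : ∫ t in Ioo a b, |ρ * t ^ (ρ - 1)| • g (t ^ ρ)
      = ρ * ∫ t in Ioo a b, k t := by
    rw [setIntegral_congr_fun measurableSet_Ioo heq]
    exact MeasureTheory.integral_const_mul ρ k
  rw [hval, hRHS] at hLHS
  have : ∫ t in Ioo a b, k t = ((c ^ ρ - a ^ ρ) ^ α - (c ^ ρ - b ^ ρ) ^ α) / (ρ * α) := by
    field_simp at hLHS ⊢
    linarith
  rw [intervalIntegral.integral_of_le hab, integral_Ioc_eq_integral_Ioo]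
  exact this

lemma key_est {ρ α : ℝ} (hρ : 0 < ρ) (hα : 0 < α) {h C : ℝ} (hC0 : 0 ≤ C)
    {F : ℝ → ℝ} (hF : ContinuousOn F (Icc 0 h))
    (hbd : ∀ t ∈ Icc 0 h, |F t| ≤ C)
    {x₁ x₂ : ℝ} (h1 : 0 ≤ x₁) (h12 : x₁ ≤ x₂) (h2 : x₂ ≤ h) :
    |(∫ t in (0:ℝ)..x₂, (x₂ ^ ρ - t ^ ρ) ^ (α - 1) * t ^ (ρ - 1) * F t)
      - ∫ t in (0:ℝ)..x₁, (x₁ ^ ρ - t ^ ρ) ^ (α - 1) * t ^ (ρ - 1) * F t|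
    ≤ C * ((((x₂ ^ ρ) ^ α - (x₁ ^ ρ) ^ α) + 2 * ((x₂ ^ ρ - x₁ ^ ρ) ^ α)) / (ρ * α)) := by
  have h2' : x₁ ≤ h := h12.trans h2
  set k₁ : ℝ → ℝ := fun t => (x₁ ^ ρ - t ^ ρ) ^ (α - 1) * t ^ (ρ - 1) with hk₁
  set k₂ : ℝ → ℝ := fun t => (x₂ ^ ρ - t ^ ρ) ^ (α - 1) * t ^ (ρ - 1) with hk₂
  obtain ⟨K1, V1⟩ := key_int hρ hα (le_refl (0:ℝ)) h1 (le_refl x₁)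
  obtain ⟨K2a, V2a⟩ := key_int hρ hα (le_refl (0:ℝ)) h1 h12
  obtain ⟨K2b, V2b⟩ := key_int hρ hα (c := x₂) h1 h12 (le_refl x₂)
  -- simplify values
  have hz : (0:ℝ) ^ ρ = 0 := Real.zero_rpow hρ.ne'
  have hzα : (0:ℝ) ^ α = 0 := Real.zero_rpow hα.ne'
  rw [hz, sub_zero, sub_self, hzα, sub_zero] at V1
  rw [hz, sub_zero] at V2a
  rw [sub_self, hzα, sub_zero] at V2b
  have hρα : 0 < ρ * α := mul_pos hρ hα
  have hΔ : (x₁ ^ ρ) ^ α ≤ (x₂ ^ ρ) ^ α :=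
    Real.rpow_le_rpow (Real.rpow_nonneg h1 ρ)
      (Real.rpow_le_rpow h1 h12 hρ.le) hα.le
  have hS0 : 0 ≤ (x₂ ^ ρ - x₁ ^ ρ) ^ α :=
    Real.rpow_nonneg (by linarith [Real.rpow_le_rpow h1 h12 hρ.le]) α
  -- continuity of F on subintervals
  have hF1 : ContinuousOn F (uIcc 0 x₁) := by
    rw [uIcc_of_le h1]; exact hF.mono (Icc_subset_Icc le_rfl h2')
  have hF2 : ContinuousOn F (uIcc x₁ x₂) := by
    rw [uIcc_of_le h12]; exact hF.mono (Icc_subset_Icc h1 h2)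
  have I1 : IntervalIntegrable (fun t => k₁ t * F t) volume 0 x₁ := K1.mul_continuousOn hF1
  have I2a : IntervalIntegrable (fun t => k₂ t * F t) volume 0 x₁ := K2a.mul_continuousOn hF1
  have I2b : IntervalIntegrable (fun t => k₂ t * F t) volume x₁ x₂ := K2b.mul_continuousOn hF2
  -- split
  have hsplit : (∫ t in (0:ℝ)..x₂, k₂ t * F t)
      = (∫ t in (0:ℝ)..x₁, k₂ t * F t) + ∫ t in x₁..x₂, k₂ t * F t :=
    (intervalIntegral.integral_add_adjacent_intervals I2a I2b).symm
  -- nonnegativity of k₂ on Ioc x₁ x₂ and Ioc 0 x₁, of k₁ on Ioc 0 x₁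
  have hk₂nn : ∀ t ∈ Icc (0:ℝ) x₂, 0 ≤ k₂ t := by
    intro t ht
    exact mul_nonneg (Real.rpow_nonneg (by
      have := Real.rpow_le_rpow ht.1 ht.2 hρ.le; linarith) _) (Real.rpow_nonneg ht.1 _)
  -- Term 2 bound
  have hT2 : |∫ t in x₁..x₂, k₂ t * F t| ≤ C * ((x₂ ^ ρ - x₁ ^ ρ) ^ α / (ρ * α)) := by
    have hb : ∀ᵐ t ∂(volume.restrict (Set.uIoc x₁ x₂)), ‖k₂ t * F t‖ ≤ C * k₂ t := by
      filter_upwards [ae_restrict_mem measurableSet_uIoc] with t ht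
      rw [uIoc_of_le h12] at ht
      have htI : t ∈ Icc (0:ℝ) x₂ := ⟨h1.trans ht.1.le, ht.2⟩
      have := hk₂nn t htI
      rw [Real.norm_eq_abs, abs_mul, abs_of_nonneg this]
      calc k₂ t * |F t| ≤ k₂ t * C :=
            mul_le_mul_of_nonneg_left (hbd t ⟨h1.trans ht.1.le, ht.2.trans h2⟩) this
        _ = C * k₂ t := mul_comm _ _
    have := intervalIntegral.norm_integral_le_abs_of_norm_le hb (K2b.const_mul C)
    rw [intervalIntegral.integral_const_mul, V2b] at this
    calc |∫ t in x₁..x₂, k₂ t * F t| ≤ |C * ((x₂ ^ ρ - x₁ ^ ρ) ^ α / (ρ * α))| := this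
      _ = C * ((x₂ ^ ρ - x₁ ^ ρ) ^ α / (ρ * α)) := abs_of_nonneg (by positivity)
  -- Term 1 bound
  have hd : IntervalIntegrable (fun t => |k₂ t - k₁ t|) volume 0 x₁ := (K2a.sub K1).abs
  have hT1a : |∫ t in (0:ℝ)..x₁, (k₂ t - k₁ t) * F t|
      ≤ C * ∫ t in (0:ℝ)..x₁, |k₂ t - k₁ t| := by
    have hb : ∀ᵐ t ∂(volume.restrict (Set.uIoc 0 x₁)), ‖(k₂ t - k₁ t) * F t‖ ≤ C * |k₂ t - k₁ t| := by
      filter_upwards [ae_restrict_mem measurableSet_uIoc] with t ht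
      rw [uIoc_of_le h1] at ht
      rw [Real.norm_eq_abs, abs_mul, mul_comm]
      exact mul_le_mul_of_nonneg_right (hbd t ⟨ht.1.le, ht.2.trans h2'⟩) (abs_nonneg _)
    have := intervalIntegral.norm_integral_le_abs_of_norm_le hb (hd.const_mul C)
    rw [intervalIntegral.integral_const_mul] at this
    refine this.trans (le_of_eq (abs_of_nonneg ?_))
    have : 0 ≤ ∫ t in (0:ℝ)..x₁, |k₂ t - k₁ t| :=
      intervalIntegral.integral_nonneg h1 (fun t _ => abs_nonneg _)
    positivity
  have hT1b : (∫ t in (0:ℝ)..x₁, |k₂ t - k₁ t|)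
      ≤ (((x₂ ^ ρ) ^ α - (x₁ ^ ρ) ^ α) + (x₂ ^ ρ - x₁ ^ ρ) ^ α) / (ρ * α) := by
    rcases le_or_gt α 1 with hle | hgt
    · -- k₂ ≤ k₁ a.e.
      have hae : ∀ᵐ t ∂volume, t ∈ Set.uIoc (0:ℝ) x₁ → |k₂ t - k₁ t| = k₁ t - k₂ t := by
        have hne : ∀ᵐ (t : ℝ) ∂volume, t ≠ x₁ := by
          rw [MeasureTheory.ae_iff]
          simpa using (by simp : volume ({x₁} : Set ℝ) = 0)
        filter_upwards [hne] with t htne ht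
        rw [uIoc_of_le h1] at ht
        have ht1 : 0 < t := ht.1
        have htx : t < x₁ := lt_of_le_of_ne ht.2 htne
        have hu : 0 < x₁ ^ ρ - t ^ ρ := by
          have := Real.rpow_lt_rpow ht1.le htx hρ; linarith
        have huv : x₁ ^ ρ - t ^ ρ ≤ x₂ ^ ρ - t ^ ρ := by
          have := Real.rpow_le_rpow h1 h12 hρ.le; linarith
        have : (x₂ ^ ρ - t ^ ρ) ^ (α - 1) ≤ (x₁ ^ ρ - t ^ ρ) ^ (α - 1) :=
          Real.rpow_le_rpow_of_nonpos hu huv (by linarith)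
        have hkk : k₂ t ≤ k₁ t :=
          mul_le_mul_of_nonneg_right this (Real.rpow_nonneg ht1.le _)
        rw [abs_of_nonpos (by linarith)]; ring
      rw [intervalIntegral.integral_congr_ae hae, intervalIntegral.integral_sub K1 K2a, V1, V2a]
      rw [div_sub_div_same, div_le_div_iff₀ hρα hρα]
      ring_nf
      nlinarith [hΔ, hS0, hρα]
    · -- k₁ ≤ k₂ pointwise
      have hae : ∀ᵐ t ∂volume, t ∈ Set.uIoc (0:ℝ) x₁ → |k₂ t - k₁ t| = k₂ t - k₁ t := by
        refine Filter.Eventually.of_forall (fun t ht => ?_)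
        rw [uIoc_of_le h1] at ht
        have ht1 : 0 < t := ht.1
        have hu : 0 ≤ x₁ ^ ρ - t ^ ρ := by
          have := Real.rpow_le_rpow ht1.le ht.2 hρ.le; linarith
        have huv : x₁ ^ ρ - t ^ ρ ≤ x₂ ^ ρ - t ^ ρ := by
          have := Real.rpow_le_rpow h1 h12 hρ.le; linarith
        have : (x₁ ^ ρ - t ^ ρ) ^ (α - 1) ≤ (x₂ ^ ρ - t ^ ρ) ^ (α - 1) :=
          Real.rpow_le_rpow hu huv (by linarith)
        have hkk : k₁ t ≤ k₂ t :=
          mul_le_mul_of_nonneg_right this (Real.rpow_nonneg ht1.le _)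
        rw [abs_of_nonneg (by linarith)]
      rw [intervalIntegral.integral_congr_ae hae, intervalIntegral.integral_sub K2a K1, V2a, V1]
      rw [div_sub_div_same, div_le_div_iff₀ hρα hρα]
      nlinarith [hΔ, hS0, hρα]
  -- combine
  calc |(∫ t in (0:ℝ)..x₂, k₂ t * F t) - ∫ t in (0:ℝ)..x₁, k₁ t * F t|
      = |(∫ t in (0:ℝ)..x₁, (k₂ t - k₁ t) * F t) + ∫ t in x₁..x₂, k₂ t * F t| := by
        rw [hsplit]
        congr 1
        simp only [sub_mul]
        rw [intervalIntegral.integral_sub I2a I1]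
        ring
    _ ≤ |∫ t in (0:ℝ)..x₁, (k₂ t - k₁ t) * F t| + |∫ t in x₁..x₂, k₂ t * F t| := abs_add_le _ _
    _ ≤ C * ((((x₂ ^ ρ) ^ α - (x₁ ^ ρ) ^ α) + (x₂ ^ ρ - x₁ ^ ρ) ^ α) / (ρ * α))
        + C * ((x₂ ^ ρ - x₁ ^ ρ) ^ α / (ρ * α)) := by
        refine add_le_add ((hT1a.trans (mul_le_mul_of_nonneg_left hT1b hC0))) hT2
    _ = C * ((((x₂ ^ ρ) ^ α - (x₁ ^ ρ) ^ α) + 2 * ((x₂ ^ ρ - x₁ ^ ρ) ^ α)) / (ρ * α)) := by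
        ring

theorem stmt11
    (ρ α : ℝ) (hρ : 0 < ρ) (hα : 0 < α)
    (m : ℕ) (hm : m = ⌈α⌉₊)
    (y₀ : ℕ → ℝ) (K hstar : ℝ) (hK : 0 < K) (hhstar : 0 < hstar)
    (T : ℝ → ℝ)
    (hT : ∀ x : ℝ, T x = ∑ k ∈ Finset.range m, x ^ k / (Nat.factorial k) * y₀ k)
    (f : ℝ → ℝ → ℝ)
    (G : Set (ℝ × ℝ))
    (hG : G = {p : ℝ × ℝ | p.1 ∈ Set.Icc 0 hstar ∧ |p.2 - T p.1| ≤ K})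
    (hf : ContinuousOn (fun p : ℝ × ℝ => f p.1 p.2) G)
    (M : ℝ) (hM : M = sSup ((fun p : ℝ × ℝ => |f p.1 p.2|) '' G))
    (h : ℝ)
    (hh : h = if M = 0 then hstar
      else min hstar ((K * Real.Gamma (α + 1) * ρ ^ α / M) ^ (1 / α)))
    (A : (ℝ → ℝ) → ℝ → ℝ)
    (hA : ∀ (y : ℝ → ℝ) (x : ℝ), A y x = T x + ρ ^ (1 - α) / Real.Gamma α *
      ∫ t in (0:ℝ)..x, (x ^ ρ - t ^ ρ) ^ (α - 1) * t ^ (ρ - 1) * f t (y t))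
    :
    ∀ ε > (0:ℝ), ∃ δ > (0:ℝ), ∀ y : ℝ → ℝ,
      (ContinuousOn y (Set.Icc 0 h) ∧ ∀ s ∈ Set.Icc 0 h, |y s - T s| ≤ K) →
      ∀ x₁ ∈ Set.Icc 0 h, ∀ x₂ ∈ Set.Icc 0 h, |x₁ - x₂| < δ →
        |A y x₁ - A y x₂| < ε := by
  intro ε hε
  -- h ≤ hstar
  have hhle : h ≤ hstar := by
    rw [hh]; split
    · exact le_rfl
    · exact min_le_left _ _
  -- T is continuous
  have hTc : Continuous T := by
    have : T = fun x => ∑ k ∈ Finset.range m, x ^ k / (Nat.factorial k) * y₀ k := funext hT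
    rw [this]
    exact continuous_finset_sum _ fun k _ =>
      ((continuous_pow k).div_const _).mul continuous_const
  -- trivial case h ≤ 0
  rcases le_or_gt h 0 with hh0 | hh0
  · refine ⟨1, one_pos, fun y hy x₁ hx₁ x₂ hx₂ _ => ?_⟩
    have e1 : x₁ = 0 := le_antisymm (hx₁.2.trans hh0) hx₁.1
    have e2 : x₂ = 0 := le_antisymm (hx₂.2.trans hh0) hx₂.1
    rw [e1, e2, sub_self, abs_zero]; exact hε
  -- G is compact
  have hGne : ((0:ℝ), T 0) ∈ G := by
    rw [hG]; exact ⟨⟨le_rfl, hhstar.le⟩, by simp [hK.le]⟩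
  have hGc : IsCompact G := by
    obtain ⟨R, hR⟩ := isCompact_Icc.exists_bound_of_continuousOn
      (hTc.continuousOn (s := Icc (0:ℝ) hstar))
    refine IsCompact.of_isClosed_subset
      ((isCompact_Icc (a := (0:ℝ)) (b := hstar)).prod
        (isCompact_Icc (a := -(R + K)) (b := R + K))) ?_ ?_
    · rw [hG]
      refine IsClosed.inter ?_ ?_
      · exact isClosed_Icc.preimage continuous_fst
      · exact isClosed_le ((continuous_snd.sub (hTc.comp continuous_fst)).abs)
          continuous_const
    · rw [hG]
      rintro ⟨x, z⟩ ⟨hx, hz⟩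
      have h1 := hR x hx
      rw [Real.norm_eq_abs] at h1
      have h2 := abs_le.1 hz
      have h3 := abs_le.1 h1
      exact ⟨hx, Set.mem_Icc.mpr ⟨by linarith [h2.1, h3.1], by linarith [h2.2, h3.2]⟩⟩
  obtain ⟨C, hC⟩ := hGc.exists_bound_of_continuousOn hf
  have hC0 : 0 ≤ C := le_trans (norm_nonneg _) (hC _ hGne)
  -- constants
  have hΓ : 0 < Real.Gamma α := Real.Gamma_pos_of_pos hα
  set c₀ : ℝ := ρ ^ (1 - α) / Real.Gamma α with hc₀def
  have hc₀ : 0 < c₀ := div_pos (Real.rpow_pos_of_pos hρ _) hΓ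
  set C₁ : ℝ := c₀ * C / (ρ * α) with hC₁def
  have hC₁ : 0 ≤ C₁ := by positivity
  -- modulus function
  set w : ℝ × ℝ → ℝ := fun p =>
    |T p.1 - T p.2| + C₁ * (|(p.2 ^ ρ) ^ α - (p.1 ^ ρ) ^ α| + 2 * |p.2 ^ ρ - p.1 ^ ρ| ^ α)
    with hwdef
  have hwc : Continuous w := by
    have hrρ : Continuous fun x : ℝ => x ^ ρ := Real.continuous_rpow_const hρ.le
    have hrα : Continuous fun x : ℝ => x ^ α := Real.continuous_rpow_const hα.le
    refine Continuous.add ?_ (continuous_const.mul (Continuous.add ?_ (continuous_const.mul ?_)))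
    · exact ((hTc.comp continuous_fst).sub (hTc.comp continuous_snd)).abs
    · exact ((hrα.comp (hrρ.comp continuous_snd)).sub (hrα.comp (hrρ.comp continuous_fst))).abs
    · exact hrα.comp ((hrρ.comp continuous_snd).sub (hrρ.comp continuous_fst)).abs
  have hwdiag : ∀ x : ℝ, w (x, x) = 0 := by
    intro x
    simp [hwdef, Real.zero_rpow hα.ne']
  have hwsymm : ∀ a b : ℝ, w (a, b) = w (b, a) := by
    intro a b
    simp only [hwdef]
    rw [abs_sub_comm (T a), abs_sub_comm ((b ^ ρ) ^ α), abs_sub_comm (b ^ ρ)]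
  -- uniform continuity of w on the compact square
  have hQ : IsCompact ((Icc (0:ℝ) h) ×ˢ (Icc (0:ℝ) h)) := isCompact_Icc.prod isCompact_Icc
  have huc : UniformContinuousOn w ((Icc (0:ℝ) h) ×ˢ (Icc (0:ℝ) h)) :=
    hQ.uniformContinuousOn_of_continuous hwc.continuousOn
  rw [Metric.uniformContinuousOn_iff] at huc
  obtain ⟨δ, hδ, hδ'⟩ := huc ε hε
  refine ⟨δ, hδ, fun y hy x₁ hx₁ x₂ hx₂ hd => ?_⟩
  -- w (x₁, x₂) < ε
  have hwlt : w (x₁, x₂) < ε := by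
    have hp : (x₁, x₂) ∈ (Icc (0:ℝ) h) ×ˢ (Icc (0:ℝ) h) := ⟨hx₁, hx₂⟩
    have hq : (x₂, x₂) ∈ (Icc (0:ℝ) h) ×ˢ (Icc (0:ℝ) h) := ⟨hx₂, hx₂⟩
    have hdist : dist ((x₁, x₂) : ℝ × ℝ) (x₂, x₂) < δ := by
      rw [Prod.dist_eq]
      simp only [dist_self]
      rw [max_eq_left dist_nonneg, Real.dist_eq]
      exact hd
    have := hδ' _ hp _ hq hdist
    rw [hwdiag, Real.dist_eq, sub_zero] at this
    exact lt_of_le_of_lt (le_abs_self _) this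
  -- the main estimate, for ordered pairs
  have main : ∀ a b : ℝ, a ∈ Icc (0:ℝ) h → b ∈ Icc (0:ℝ) h → a ≤ b →
      |A y a - A y b| ≤ w (a, b) := by
    intro a b ha hb hab
    -- F continuous and bounded
    set F : ℝ → ℝ := fun t => f t (y t) with hFdef
    have hFc : ContinuousOn F (Icc 0 h) := by
      have hmap : MapsTo (fun t => ((t, y t) : ℝ × ℝ)) (Icc 0 h) G := by
        intro t ht
        rw [hG]
        exact ⟨⟨ht.1, ht.2.trans hhle⟩, hy.2 t ht⟩
      exact hf.comp (continuousOn_id.prodMk hy.1) hmap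
    have hFbd : ∀ t ∈ Icc (0:ℝ) h, |F t| ≤ C := by
      intro t ht
      have : ((t, y t) : ℝ × ℝ) ∈ G := by
        rw [hG]; exact ⟨⟨ht.1, ht.2.trans hhle⟩, hy.2 t ht⟩
      simpa [Real.norm_eq_abs] using hC _ this
    have hest := key_est hρ hα hC0 hFc hFbd ha.1 hab hb.2
    -- unfold A
    rw [hA, hA]
    have heq : T a + c₀ * (∫ t in (0:ℝ)..a, (a ^ ρ - t ^ ρ) ^ (α - 1) * t ^ (ρ - 1) * F t)
        - (T b + c₀ * (∫ t in (0:ℝ)..b, (b ^ ρ - t ^ ρ) ^ (α - 1) * t ^ (ρ - 1) * F t))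
        = (T a - T b) - c₀ * ((∫ t in (0:ℝ)..b, (b ^ ρ - t ^ ρ) ^ (α - 1) * t ^ (ρ - 1) * F t)
          - ∫ t in (0:ℝ)..a, (a ^ ρ - t ^ ρ) ^ (α - 1) * t ^ (ρ - 1) * F t) := by ring
    have hFt : ∀ t, f t (y t) = F t := fun _ => rfl
    simp only [hFt]
    rw [heq]
    refine (abs_sub _ _).trans ?_
    have hΔ : (a ^ ρ) ^ α ≤ (b ^ ρ) ^ α :=
      Real.rpow_le_rpow (Real.rpow_nonneg ha.1 ρ) (Real.rpow_le_rpow ha.1 hab hρ.le) hα.le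
    have hS : (0:ℝ) ≤ b ^ ρ - a ^ ρ := by
      have := Real.rpow_le_rpow ha.1 hab hρ.le; linarith
    have habs : |c₀ * ((∫ t in (0:ℝ)..b, (b ^ ρ - t ^ ρ) ^ (α - 1) * t ^ (ρ - 1) * F t)
          - ∫ t in (0:ℝ)..a, (a ^ ρ - t ^ ρ) ^ (α - 1) * t ^ (ρ - 1) * F t)|
        ≤ c₀ * (C * ((((b ^ ρ) ^ α - (a ^ ρ) ^ α) + 2 * ((b ^ ρ - a ^ ρ) ^ α)) / (ρ * α))) := by
      rw [abs_mul, abs_of_pos hc₀]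
      exact mul_le_mul_of_nonneg_left hest hc₀.le
    refine (add_le_add le_rfl habs).trans (le_of_eq ?_)
    simp only [hwdef]
    rw [abs_of_nonneg (by linarith : (0:ℝ) ≤ (b ^ ρ) ^ α - (a ^ ρ) ^ α),
      abs_of_nonneg hS, hC₁def]
    field_simp
  rcases le_total x₁ x₂ with hle | hle
  · exact lt_of_le_of_lt (main x₁ x₂ hx₁ hx₂ hle) hwlt
  · have := main x₂ x₁ hx₂ hx₁ hle
    rw [abs_sub_comm] at this
    exact lt_of_le_of_lt (this.trans (le_of_eq (hwsymm x₂ x₁))) hwlt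
end

section
/- The image A(U) := {Ay : y ∈ U} is relatively compact in the Banach space C([0, h], ℝ) of continuous real-valued functions on [0, h] equipped with the supremum (Chebyshev) norm; i.e., the closure of A(U) in C([0, h], ℝ) is compact. -/
open Set MeasureTheory intervalIntegral Filter


lemma aux_cont_rpow {c : ℝ} (hc : 0 ≤ c) : Continuous fun u : ℝ => u ^ c :=
  continuous_iff_continuousAt.mpr fun x => Real.continuousAt_rpow_const x c (Or.inr hc)


lemma aux_kint {α : ℝ} (hα : 0 < α) (s a b : ℝ) :
    IntervalIntegrable (fun u => (s - u) ^ (α - 1)) volume a b := by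
  have h := (intervalIntegrable_rpow' (a := s - a) (b := s - b)
    (by linarith : (-1:ℝ) < α - 1)).comp_sub_left s
  simpa using h

lemma aux_intable {α : ℝ} (hα : 0 < α) (s a b : ℝ) {ψ : ℝ → ℝ} (hψ : Continuous ψ) :
    IntervalIntegrable (fun u => (s - u) ^ (α - 1) * ψ u) volume a b :=
  (aux_kint hα s a b).mul_continuousOn hψ.continuousOn

lemma aux_value {α : ℝ} (hα : 0 < α) (s a b : ℝ) :
    ∫ u in a..b, (s - u) ^ (α - 1) = ((s - a) ^ α - (s - b) ^ α) / α := by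
  rw [show (fun u => (s - u) ^ (α - 1)) = fun u => ((fun v : ℝ => v ^ (α - 1)) (s - u))
      from rfl,
    intervalIntegral.integral_comp_sub_left (fun v : ℝ => v ^ (α - 1)) s,
    integral_rpow (Or.inl (by linarith : (-1:ℝ) < α - 1)), sub_add_cancel]

lemma aux_onedim {α M : ℝ} (hα : 0 < α) (hM : 0 ≤ M)
    {ψ : ℝ → ℝ} (hψ : Continuous ψ) (hb : ∀ u, |ψ u| ≤ M)
    {s₁ s₂ : ℝ} (h0 : 0 ≤ s₁) (h12 : s₁ ≤ s₂) :
    |(∫ u in (0:ℝ)..s₂, (s₂ - u) ^ (α - 1) * ψ u) -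
      ∫ u in (0:ℝ)..s₁, (s₁ - u) ^ (α - 1) * ψ u| ≤
    M / α * (|s₂ ^ α - s₁ ^ α| + 2 * (s₂ - s₁) ^ α) := by
  have i2a := aux_intable hα s₂ 0 s₁ hψ
  have i2b := aux_intable hα s₂ s₁ s₂ hψ
  have i1 := aux_intable hα s₁ 0 s₁ hψ
  have k1 := aux_kint hα s₁ 0 s₁
  have k2 := aux_kint hα s₂ 0 s₁
  have hrn : (0:ℝ) ≤ (s₂ - s₁) ^ α := Real.rpow_nonneg (by linarith) α
  have split : (∫ u in (0:ℝ)..s₂, (s₂ - u) ^ (α - 1) * ψ u)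
      = (∫ u in (0:ℝ)..s₁, (s₂ - u) ^ (α - 1) * ψ u)
        + ∫ u in s₁..s₂, (s₂ - u) ^ (α - 1) * ψ u :=
    (intervalIntegral.integral_add_adjacent_intervals i2a i2b).symm
  have hdiff : (∫ u in (0:ℝ)..s₂, (s₂ - u) ^ (α - 1) * ψ u) -
      (∫ u in (0:ℝ)..s₁, (s₁ - u) ^ (α - 1) * ψ u)
      = (∫ u in (0:ℝ)..s₁, ((s₂ - u) ^ (α - 1) * ψ u - (s₁ - u) ^ (α - 1) * ψ u))
        + ∫ u in s₁..s₂, (s₂ - u) ^ (α - 1) * ψ u := by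
    rw [split, intervalIntegral.integral_sub i2a i1]; ring
  rw [hdiff]
  -- tail bound
  have tail : |∫ u in s₁..s₂, (s₂ - u) ^ (α - 1) * ψ u| ≤ M * (s₂ - s₁) ^ α / α := by
    have hle : ∀ᵐ t ∂(volume.restrict (Set.uIoc s₁ s₂)),
        ‖(s₂ - t) ^ (α - 1) * ψ t‖ ≤ (s₂ - t) ^ (α - 1) * M := by
      refine (ae_restrict_mem measurableSet_uIoc).mono fun t ht => ?_
      rw [Set.uIoc_of_le h12] at ht
      have hk : (0:ℝ) ≤ (s₂ - t) ^ (α - 1) := Real.rpow_nonneg (by linarith [ht.2]) _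
      rw [Real.norm_eq_abs, abs_mul, abs_of_nonneg hk]
      exact mul_le_mul_of_nonneg_left (hb t) hk
    have hbint : IntervalIntegrable (fun t => (s₂ - t) ^ (α - 1) * M) volume s₁ s₂ :=
      (aux_kint hα s₂ s₁ s₂).mul_const M
    have h := intervalIntegral.norm_integral_le_abs_of_norm_le hle hbint
    rw [Real.norm_eq_abs] at h
    refine h.trans ?_
    rw [intervalIntegral.integral_mul_const, aux_value hα, sub_self,
      Real.zero_rpow hα.ne', sub_zero,
      abs_of_nonneg (mul_nonneg (div_nonneg hrn hα.le) hM)]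
    exact le_of_eq (by ring)
  -- head bound
  have v1 : (∫ u in (0:ℝ)..s₁, (s₁ - u) ^ (α - 1)) = s₁ ^ α / α := by
    rw [aux_value hα, sub_zero, sub_self, Real.zero_rpow hα.ne', sub_zero]
  have v2 : (∫ u in (0:ℝ)..s₁, (s₂ - u) ^ (α - 1)) = (s₂ ^ α - (s₂ - s₁) ^ α) / α := by
    rw [aux_value hα, sub_zero]
  have habs : |s₁ ^ α - (s₂ ^ α - (s₂ - s₁) ^ α)| ≤ |s₂ ^ α - s₁ ^ α| + (s₂ - s₁) ^ α := by
    have e1 : s₁ ^ α - s₂ ^ α ≤ |s₂ ^ α - s₁ ^ α| := by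
      rw [abs_sub_comm]; exact le_abs_self _
    have e2 : -|s₂ ^ α - s₁ ^ α| ≤ s₁ ^ α - s₂ ^ α := by
      rw [abs_sub_comm]; exact neg_abs_le _
    rw [abs_le]; constructor <;> linarith
  have head : |∫ u in (0:ℝ)..s₁, ((s₂ - u) ^ (α - 1) * ψ u - (s₁ - u) ^ (α - 1) * ψ u)|
      ≤ M / α * (|s₂ ^ α - s₁ ^ α| + (s₂ - s₁) ^ α) := by
    rcases le_or_gt α 1 with hc | hc
    · have hne' : ∀ᵐ t ∂(volume : Measure ℝ), t ≠ s₁ := by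
        rw [MeasureTheory.ae_iff]
        simp only [ne_eq, not_not, setOf_eq_eq_singleton]
        exact measure_singleton s₁
      have hae : ∀ᵐ t ∂(volume.restrict (Set.uIoc 0 s₁)),
          ‖(s₂ - t) ^ (α - 1) * ψ t - (s₁ - t) ^ (α - 1) * ψ t‖
            ≤ ((s₁ - t) ^ (α - 1) - (s₂ - t) ^ (α - 1)) * M := by
        filter_upwards [ae_restrict_mem measurableSet_uIoc,
          MeasureTheory.ae_restrict_of_ae hne'] with t ht hts
        rw [Set.uIoc_of_le h0] at ht
        have ht1 : 0 < s₁ - t := sub_pos.mpr (lt_of_le_of_ne ht.2 hts)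
        have hk21 : (s₂ - t) ^ (α - 1) ≤ (s₁ - t) ^ (α - 1) :=
          Real.rpow_le_rpow_of_nonpos ht1 (by linarith) (by linarith)
        rw [show (s₂ - t) ^ (α - 1) * ψ t - (s₁ - t) ^ (α - 1) * ψ t
            = ((s₂ - t) ^ (α - 1) - (s₁ - t) ^ (α - 1)) * ψ t from by ring,
          Real.norm_eq_abs, abs_mul, abs_of_nonpos (by linarith), neg_sub]
        exact mul_le_mul_of_nonneg_left (hb t) (by linarith)
      have hbint : IntervalIntegrable
          (fun t => ((s₁ - t) ^ (α - 1) - (s₂ - t) ^ (α - 1)) * M) volume 0 s₁ :=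
        (k1.sub k2).mul_const M
      have h := intervalIntegral.norm_integral_le_abs_of_norm_le hae hbint
      rw [Real.norm_eq_abs] at h
      refine h.trans ?_
      rw [intervalIntegral.integral_mul_const, intervalIntegral.integral_sub k1 k2, v1, v2,
        div_sub_div_same, abs_mul, abs_of_nonneg hM, abs_div, abs_of_pos hα]
      calc |s₁ ^ α - (s₂ ^ α - (s₂ - s₁) ^ α)| / α * M
          ≤ (|s₂ ^ α - s₁ ^ α| + (s₂ - s₁) ^ α) / α * M := by gcongr
        _ = M / α * (|s₂ ^ α - s₁ ^ α| + (s₂ - s₁) ^ α) := by ring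
    · have hae : ∀ᵐ t ∂(volume.restrict (Set.uIoc 0 s₁)),
          ‖(s₂ - t) ^ (α - 1) * ψ t - (s₁ - t) ^ (α - 1) * ψ t‖
            ≤ ((s₂ - t) ^ (α - 1) - (s₁ - t) ^ (α - 1)) * M := by
        filter_upwards [ae_restrict_mem measurableSet_uIoc] with t ht
        rw [Set.uIoc_of_le h0] at ht
        have ht1 : 0 ≤ s₁ - t := sub_nonneg.mpr ht.2
        have hk12 : (s₁ - t) ^ (α - 1) ≤ (s₂ - t) ^ (α - 1) :=
          Real.rpow_le_rpow ht1 (by linarith) (by linarith)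
        rw [show (s₂ - t) ^ (α - 1) * ψ t - (s₁ - t) ^ (α - 1) * ψ t
            = ((s₂ - t) ^ (α - 1) - (s₁ - t) ^ (α - 1)) * ψ t from by ring,
          Real.norm_eq_abs, abs_mul, abs_of_nonneg (by linarith)]
        exact mul_le_mul_of_nonneg_left (hb t) (by linarith)
      have hbint : IntervalIntegrable
          (fun t => ((s₂ - t) ^ (α - 1) - (s₁ - t) ^ (α - 1)) * M) volume 0 s₁ :=
        (k2.sub k1).mul_const M
      have h := intervalIntegral.norm_integral_le_abs_of_norm_le hae hbint
      rw [Real.norm_eq_abs] at h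
      refine h.trans ?_
      rw [intervalIntegral.integral_mul_const, intervalIntegral.integral_sub k2 k1, v1, v2,
        div_sub_div_same, abs_mul, abs_of_nonneg hM, abs_div, abs_of_pos hα]
      have habs' : |s₂ ^ α - (s₂ - s₁) ^ α - s₁ ^ α| ≤ |s₂ ^ α - s₁ ^ α| + (s₂ - s₁) ^ α := by
        have e1 : s₂ ^ α - s₁ ^ α ≤ |s₂ ^ α - s₁ ^ α| := le_abs_self _
        have e2 : -|s₂ ^ α - s₁ ^ α| ≤ s₂ ^ α - s₁ ^ α := neg_abs_le _
        rw [abs_le]; constructor <;> linarith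
      calc |s₂ ^ α - (s₂ - s₁) ^ α - s₁ ^ α| / α * M
          ≤ (|s₂ ^ α - s₁ ^ α| + (s₂ - s₁) ^ α) / α * M := by gcongr
        _ = M / α * (|s₂ ^ α - s₁ ^ α| + (s₂ - s₁) ^ α) := by ring
  calc |(∫ u in (0:ℝ)..s₁, ((s₂ - u) ^ (α - 1) * ψ u - (s₁ - u) ^ (α - 1) * ψ u))
        + ∫ u in s₁..s₂, (s₂ - u) ^ (α - 1) * ψ u|
      ≤ |∫ u in (0:ℝ)..s₁, ((s₂ - u) ^ (α - 1) * ψ u - (s₁ - u) ^ (α - 1) * ψ u)|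
        + |∫ u in s₁..s₂, (s₂ - u) ^ (α - 1) * ψ u| := abs_add_le _ _
    _ ≤ M / α * (|s₂ ^ α - s₁ ^ α| + (s₂ - s₁) ^ α) + M * (s₂ - s₁) ^ α / α :=
        add_le_add head tail
    _ = M / α * (|s₂ ^ α - s₁ ^ α| + 2 * (s₂ - s₁) ^ α) := by ring


lemma aux_subst {ρ α : ℝ} (hρ : 0 < ρ) (hα : 0 < α) {φ : ℝ → ℝ}
    {x : ℝ} (hx : 0 ≤ x) :
    (∫ t in (0:ℝ)..x, (x ^ ρ - t ^ ρ) ^ (α - 1) * t ^ (ρ - 1) * φ t)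
      = (1 / ρ) * ∫ u in (0:ℝ)..x ^ ρ, (x ^ ρ - u) ^ (α - 1) * φ (u ^ (1 / ρ)) := by
  set G : ℝ → ℝ := fun u => (x ^ ρ - u) ^ (α - 1) * φ (u ^ (1 / ρ)) with hG
  have hxρ : (0:ℝ) ≤ x ^ ρ := Real.rpow_nonneg hx ρ
  have himg : (fun t : ℝ => t ^ ρ) '' (Ioo 0 x) = Ioo 0 (x ^ ρ) := by
    ext u
    constructor
    · rintro ⟨t, ⟨ht0, htx⟩, rfl⟩
      exact ⟨Real.rpow_pos_of_pos ht0 ρ, Real.rpow_lt_rpow ht0.le htx hρ⟩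
    · rintro ⟨hu0, hux⟩
      refine ⟨u ^ (1 / ρ), ⟨Real.rpow_pos_of_pos hu0 _, ?_⟩, ?_⟩
      · have := Real.rpow_lt_rpow hu0.le hux (one_div_pos.mpr hρ)
        rwa [← Real.rpow_mul hx, mul_one_div_cancel hρ.ne', Real.rpow_one] at this
      · show (u ^ (1 / ρ)) ^ ρ = u
        rw [← Real.rpow_mul hu0.le, one_div_mul_cancel hρ.ne', Real.rpow_one]
  have hderiv : ∀ t ∈ Ioo (0:ℝ) x, HasDerivWithinAt (fun t : ℝ => t ^ ρ)
      (ρ * t ^ (ρ - 1)) (Ioo 0 x) t := fun t ht =>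
    (Real.hasDerivAt_rpow_const (Or.inl ht.1.ne')).hasDerivWithinAt
  have hinj : InjOn (fun t : ℝ => t ^ ρ) (Ioo 0 x) := by
    intro a ha b hb hab
    have hab' : a ^ ρ = b ^ ρ := hab
    have : (a ^ ρ) ^ (1 / ρ) = (b ^ ρ) ^ (1 / ρ) := by rw [hab']
    rwa [← Real.rpow_mul ha.1.le, ← Real.rpow_mul hb.1.le, mul_one_div_cancel hρ.ne',
      Real.rpow_one, Real.rpow_one] at this
  have cov := integral_image_eq_integral_abs_deriv_smul measurableSet_Ioo hderiv hinj G
  rw [himg] at cov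
  have congr1 : ∫ t in Ioo (0:ℝ) x, |ρ * t ^ (ρ - 1)| • G (t ^ ρ)
      = ∫ t in Ioo (0:ℝ) x, ρ * ((x ^ ρ - t ^ ρ) ^ (α - 1) * t ^ (ρ - 1) * φ t) := by
    refine setIntegral_congr_fun measurableSet_Ioo fun t ht => ?_
    have ht1 : (0:ℝ) < t ^ (ρ - 1) := Real.rpow_pos_of_pos ht.1 _
    have : (t ^ ρ) ^ (1 / ρ) = t := by
      rw [← Real.rpow_mul ht.1.le, mul_one_div_cancel hρ.ne', Real.rpow_one]
    rw [hG]
    simp only [smul_eq_mul, this]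
    rw [abs_of_pos (mul_pos hρ ht1)]
    ring
  rw [intervalIntegral.integral_of_le hx, intervalIntegral.integral_of_le hxρ,
    integral_Ioc_eq_integral_Ioo, integral_Ioc_eq_integral_Ioo, cov, congr1,
    MeasureTheory.integral_const_mul]
  field_simp

lemma aux_core {ρ α M : ℝ} (hρ : 0 < ρ) (hα : 0 < α) (hM : 0 ≤ M)
    {φ : ℝ → ℝ} (hφ : Continuous φ) (hb : ∀ t, |φ t| ≤ M)
    {x₁ x₂ : ℝ} (h0 : 0 ≤ x₁) (h12 : x₁ ≤ x₂) :
    |(∫ t in (0:ℝ)..x₂, (x₂ ^ ρ - t ^ ρ) ^ (α - 1) * t ^ (ρ - 1) * φ t) -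
      ∫ t in (0:ℝ)..x₁, (x₁ ^ ρ - t ^ ρ) ^ (α - 1) * t ^ (ρ - 1) * φ t| ≤
    M / (ρ * α) * (|x₂ ^ (ρ * α) - x₁ ^ (ρ * α)| + 2 * (x₂ ^ ρ - x₁ ^ ρ) ^ α) := by
  have hx2 : (0:ℝ) ≤ x₂ := le_trans h0 h12
  rw [aux_subst hρ hα h0, aux_subst hρ hα hx2, ← mul_sub, abs_mul,
    abs_of_pos (one_div_pos.mpr hρ)]
  have hψ : Continuous fun u : ℝ => φ (u ^ (1 / ρ)) :=
    hφ.comp (aux_cont_rpow (by positivity))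
  have h1 : (0:ℝ) ≤ x₁ ^ ρ := Real.rpow_nonneg h0 ρ
  have h2 : x₁ ^ ρ ≤ x₂ ^ ρ := Real.rpow_le_rpow h0 h12 hρ.le
  have key := aux_onedim hα hM hψ (fun u => hb _) h1 h2
  rw [← Real.rpow_mul hx2, ← Real.rpow_mul h0] at key
  calc 1 / ρ * |(∫ u in (0:ℝ)..x₂ ^ ρ, (x₂ ^ ρ - u) ^ (α - 1) * φ (u ^ (1 / ρ))) -
        ∫ u in (0:ℝ)..x₁ ^ ρ, (x₁ ^ ρ - u) ^ (α - 1) * φ (u ^ (1 / ρ))|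
      ≤ 1 / ρ * (M / α * (|x₂ ^ (ρ * α) - x₁ ^ (ρ * α)| + 2 * (x₂ ^ ρ - x₁ ^ ρ) ^ α)) :=
        mul_le_mul_of_nonneg_left key (by positivity)
    _ = M / (ρ * α) * (|x₂ ^ (ρ * α) - x₁ ^ (ρ * α)| + 2 * (x₂ ^ ρ - x₁ ^ ρ) ^ α) := by
        ring

theorem stmt12
    (ρ α : ℝ) (hρ : 0 < ρ) (hα : 0 < α)
    (m : ℕ) (hm : m = ⌈α⌉₊)
    (y₀ : ℕ → ℝ) (K hstar : ℝ) (hK : 0 < K) (hhstar : 0 < hstar)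
    (T : ℝ → ℝ)
    (hT : ∀ x : ℝ, T x = ∑ k ∈ Finset.range m, x ^ k / (Nat.factorial k) * y₀ k)
    (f : ℝ → ℝ → ℝ)
    (G : Set (ℝ × ℝ))
    (hG : G = {p : ℝ × ℝ | p.1 ∈ Set.Icc 0 hstar ∧ |p.2 - T p.1| ≤ K})
    (hf : ContinuousOn (fun p : ℝ × ℝ => f p.1 p.2) G)
    (M : ℝ) (hM : M = sSup ((fun p : ℝ × ℝ => |f p.1 p.2|) '' G))
    (h : ℝ)
    (hh : h = if M = 0 then hstar
      else min hstar ((K * Real.Gamma (α + 1) * ρ ^ α / M) ^ (1 / α)))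
    (A : (ℝ → ℝ) → ℝ → ℝ)
    (hA : ∀ (y : ℝ → ℝ) (x : ℝ), A y x = T x + ρ ^ (1 - α) / Real.Gamma α *
      ∫ t in (0:ℝ)..x, (x ^ ρ - t ^ ρ) ^ (α - 1) * t ^ (ρ - 1) * f t (y t))
    :
    IsCompact (closure {g : C(Set.Icc (0:ℝ) h, ℝ) | ∃ y : ℝ → ℝ,
      (ContinuousOn y (Set.Icc 0 h) ∧ ∀ s ∈ Set.Icc 0 h, |y s - T s| ≤ K) ∧
      ∀ t : Set.Icc (0:ℝ) h, g t = A y t}) := by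
  have hΓ : 0 < Real.Gamma α := Real.Gamma_pos_of_pos hα
  set c : ℝ := ρ ^ (1 - α) / Real.Gamma α with hc
  have hc0 : 0 < c := div_pos (Real.rpow_pos_of_pos hρ _) hΓ
  have hTc : Continuous T := by
    have hTe : T = fun x => ∑ k ∈ Finset.range m, x ^ k / (Nat.factorial k) * y₀ k :=
      funext hT
    rw [hTe]
    exact continuous_finset_sum _ fun k _ =>
      ((continuous_pow k).div_const _).mul continuous_const
  have hGeq : G = (fun q : ℝ × ℝ => (q.1, q.2 + T q.1)) '' (Icc 0 hstar ×ˢ Icc (-K) K) := by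
    ext ⟨a, b⟩
    simp only [hG, Set.mem_image, Set.mem_setOf_eq, Set.mem_prod, Prod.exists,
      Prod.mk.injEq]
    constructor
    · rintro ⟨ha, hb⟩
      exact ⟨a, b - T a, ⟨ha, abs_le.mp hb⟩, rfl, by ring⟩
    · rintro ⟨p, q, ⟨hp, hq⟩, rfl, rfl⟩
      refine ⟨hp, ?_⟩
      rw [add_sub_cancel_right]
      exact abs_le.mpr hq
  have hGcomp : IsCompact G := by
    rw [hGeq]
    exact (isCompact_Icc.prod isCompact_Icc).image (by fun_prop)
  have hGne : ((0:ℝ), T 0) ∈ G := by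
    simp [hG, hhstar.le, hK.le]
  have hMub : ∀ p ∈ G, |f p.1 p.2| ≤ M := by
    intro p hp
    rw [hM]
    exact le_csSup (hGcomp.image_of_continuousOn hf.abs).bddAbove ⟨p, hp, rfl⟩
  have hM0 : 0 ≤ M := le_trans (abs_nonneg _) (hMub _ hGne)
  have hh0 : 0 < h := by
    rw [hh]; split_ifs with hMz
    · exact hhstar
    · refine lt_min hhstar (Real.rpow_pos_of_pos ?_ _)
      have hMpos : 0 < M := lt_of_le_of_ne hM0 (Ne.symm hMz)
      have hΓ1 : 0 < Real.Gamma (α + 1) := Real.Gamma_pos_of_pos (by linarith)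
      have hρα : 0 < ρ ^ α := Real.rpow_pos_of_pos hρ α
      positivity
  have hhle : h ≤ hstar := by
    rw [hh]; split_ifs
    · exact le_refl _
    · exact min_le_left _ _
  set X : Set ℝ := Set.Icc 0 h with hX
  have hρα : 0 < ρ * α := mul_pos hρ hα
  -- the modulus of continuity
  set Ω : ℝ → ℝ → ℝ := fun a b => |T b - T a| +
    c * (M / (ρ * α)) * (|b ^ (ρ * α) - a ^ (ρ * α)| + 2 * |b ^ ρ - a ^ ρ| ^ α) with hΩdef
  have hΩ0 : ∀ a : ℝ, Ω a a = 0 := by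
    intro a
    simp only [hΩdef, sub_self, abs_zero]
    rw [Real.zero_rpow hα.ne']
    ring
  have hΩsymm : ∀ a b : ℝ, Ω a b = Ω b a := by
    intro a b
    simp only [hΩdef]
    rw [abs_sub_comm (T b), abs_sub_comm (b ^ (ρ * α)), abs_sub_comm (b ^ ρ)]
  have hΩc : ∀ x₀ : X, Continuous fun x : X => Ω (x₀ : ℝ) (x : ℝ) := by
    intro x₀
    have hv : Continuous fun x : X => (x : ℝ) := continuous_subtype_val
    have c1 : Continuous fun x : X => |T (x : ℝ) - T (x₀ : ℝ)| :=
      ((hTc.comp hv).sub continuous_const).abs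
    have c2 : Continuous fun x : X => |(x : ℝ) ^ (ρ * α) - (x₀ : ℝ) ^ (ρ * α)| :=
      (((aux_cont_rpow hρα.le).comp hv).sub continuous_const).abs
    have c3 : Continuous fun x : X => |(x : ℝ) ^ ρ - (x₀ : ℝ) ^ ρ| ^ α :=
      (aux_cont_rpow hα.le).comp ((((aux_cont_rpow hρ.le).comp hv).sub continuous_const).abs)
    exact c1.add (continuous_const.mul (c2.add (continuous_const.mul c3)))
  have hΩ00 : ∀ x₀ : X, Tendsto (fun x : X => Ω (x₀ : ℝ) (x : ℝ)) (nhds x₀) (nhds 0) := by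
    intro x₀
    have h00 := (hΩc x₀).tendsto x₀
    simpa only [hΩ0] using h00
  -- uniform bound
  obtain ⟨C₀, hC₀⟩ := isCompact_Icc.exists_bound_of_continuousOn hTc.continuousOn
  set B : ℝ := C₀ + c * (M / (ρ * α) * (3 * h ^ (ρ * α))) with hBdef
  -- the enclosing compact-candidate set
  set S' : Set C(X, ℝ) := {g | (∀ x : X, ‖g x‖ ≤ B) ∧
    ∀ u v : X, |g v - g u| ≤ Ω (u : ℝ) (v : ℝ)} with hS'def
  have hS'closed : IsClosed S' := by
    have h1 : IsClosed {g : C(X, ℝ) | ∀ x : X, ‖g x‖ ≤ B} := by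
      rw [setOf_forall]
      exact isClosed_iInter fun x =>
        isClosed_le (continuous_eval_const x).norm continuous_const
    have h2 : IsClosed {g : C(X, ℝ) | ∀ u v : X, |g v - g u| ≤ Ω (u : ℝ) (v : ℝ)} := by
      rw [setOf_forall]
      refine isClosed_iInter fun u => ?_
      rw [setOf_forall]
      exact isClosed_iInter fun v =>
        isClosed_le ((continuous_eval_const v).sub (continuous_eval_const u)).abs
          continuous_const
    exact h1.inter h2
  have hEq : Equicontinuous ((↑) : S' → X → ℝ) := by
    intro x₀
    rw [Metric.equicontinuousAt_iff_right]
    intro ε hε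
    have hev : ∀ᶠ x : X in nhds x₀, Ω (x₀ : ℝ) (x : ℝ) < ε :=
      (hΩ00 x₀).eventually_lt_const hε
    filter_upwards [hev] with x hx g
    rw [Real.dist_eq, abs_sub_comm]
    exact lt_of_le_of_lt (g.2.2 x₀ x) hx
  have hPt : IsCompact (ContinuousMap.toFun '' S') := by
    have hPeq : ContinuousMap.toFun '' S' = {F : X → ℝ | (∀ x : X, ‖F x‖ ≤ B) ∧
        ∀ u v : X, |F v - F u| ≤ Ω (u : ℝ) (v : ℝ)} := by
      ext F
      constructor
      · rintro ⟨g, hg, rfl⟩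
        exact hg
      · rintro ⟨hF1, hF2⟩
        have hFc : Continuous F := by
          rw [continuous_iff_continuousAt]
          intro x₀
          rw [ContinuousAt, tendsto_iff_dist_tendsto_zero]
          refine squeeze_zero (fun _ => dist_nonneg) (fun x => ?_) (hΩ00 x₀)
          rw [Real.dist_eq]
          exact hF2 x₀ x
        exact ⟨⟨F, hFc⟩, ⟨hF1, hF2⟩, rfl⟩
    rw [hPeq]
    refine IsCompact.of_isClosed_subset
      (isCompact_univ_pi fun _ : X => isCompact_Icc (a := -B) (b := B)) ?_ ?_
    · have h1 : IsClosed {F : X → ℝ | ∀ x : X, ‖F x‖ ≤ B} := by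
        rw [setOf_forall]
        exact isClosed_iInter fun x =>
          isClosed_le (continuous_apply x).norm continuous_const
      have h2 : IsClosed {F : X → ℝ | ∀ u v : X, |F v - F u| ≤ Ω (u : ℝ) (v : ℝ)} := by
        rw [setOf_forall]
        refine isClosed_iInter fun u => ?_
        rw [setOf_forall]
        exact isClosed_iInter fun v =>
          isClosed_le ((continuous_apply v).sub (continuous_apply u)).abs continuous_const
      exact h1.inter h2
    · intro F hF
      rw [Set.mem_univ_pi]
      intro x
      have := hF.1 x
      rw [Real.norm_eq_abs] at this
      exact abs_le.mp this
  refine IsCompact.of_isClosed_subset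
    (ArzelaAscoli.isCompact_of_equicontinuous S' hPt hEq) isClosed_closure
    (closure_minimal ?_ hS'closed)
  -- the image set is contained in S'
  rintro g ⟨y, ⟨hyc, hyK⟩, hgy⟩
  -- build the continuous global substitute for f (t, y t)
  set pr : ℝ → ℝ := fun t => max 0 (min t h) with hpr
  have hprc : Continuous pr := continuous_const.max (continuous_id.min continuous_const)
  have hprm : ∀ t, pr t ∈ Set.Icc (0:ℝ) h := fun t =>
    ⟨le_max_left _ _, max_le hh0.le (min_le_right _ _)⟩
  have hprG : ∀ t, (pr t, y (pr t)) ∈ G := by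
    intro t
    rw [hG]
    exact ⟨⟨(hprm t).1, le_trans (hprm t).2 hhle⟩, hyK _ (hprm t)⟩
  set φ : ℝ → ℝ := fun t => f (pr t) (y (pr t)) with hφdef
  have hyc' : Continuous fun t => y (pr t) := hyc.comp_continuous hprc hprm
  have hφc : Continuous φ := hf.comp_continuous (hprc.prodMk hyc') hprG
  have hφb : ∀ t, |φ t| ≤ M := fun t => hMub _ (hprG t)
  have hgt : ∀ t : X, g t = T (t : ℝ) + c *
      ∫ s in (0:ℝ)..(t : ℝ), ((t : ℝ) ^ ρ - s ^ ρ) ^ (α - 1) * s ^ (ρ - 1) * φ s := by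
    intro t
    rw [hgy t, hA]
    congr 1
    congr 1
    apply intervalIntegral.integral_congr
    intro s hs
    rw [Set.uIcc_of_le t.2.1] at hs
    have hs' : s ∈ Set.Icc (0:ℝ) h := ⟨hs.1, le_trans hs.2 t.2.2⟩
    have hps : pr s = s := by
      rw [hpr]
      dsimp only
      rw [min_eq_left hs'.2, max_eq_right hs'.1]
    simp only [hφdef, hps]
  constructor
  · -- uniform bound
    intro x
    rw [hgt x]
    have h3 := aux_core hρ hα hM0 hφc hφb (le_refl (0:ℝ)) x.2.1
    rw [intervalIntegral.integral_same, sub_zero, Real.zero_rpow hρα.ne',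
      Real.zero_rpow hρ.ne', sub_zero, sub_zero, ← Real.rpow_mul x.2.1,
      abs_of_nonneg (Real.rpow_nonneg x.2.1 _)] at h3
    have hxh : (x : ℝ) ^ (ρ * α) ≤ h ^ (ρ * α) :=
      Real.rpow_le_rpow x.2.1 x.2.2 hρα.le
    have hIb : |∫ s in (0:ℝ)..(x : ℝ), ((x : ℝ) ^ ρ - s ^ ρ) ^ (α - 1) * s ^ (ρ - 1) * φ s|
        ≤ M / (ρ * α) * (3 * h ^ (ρ * α)) := by
      refine h3.trans ?_
      have hd : (0:ℝ) ≤ M / (ρ * α) := div_nonneg hM0 hρα.le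
      nlinarith [hd, hxh]
    rw [Real.norm_eq_abs]
    calc |T (x : ℝ) + c * ∫ s in (0:ℝ)..(x : ℝ),
          ((x : ℝ) ^ ρ - s ^ ρ) ^ (α - 1) * s ^ (ρ - 1) * φ s|
        ≤ |T (x : ℝ)| + c * |∫ s in (0:ℝ)..(x : ℝ),
          ((x : ℝ) ^ ρ - s ^ ρ) ^ (α - 1) * s ^ (ρ - 1) * φ s| := by
          refine (abs_add_le _ _).trans ?_
          rw [abs_mul, abs_of_pos hc0]
      _ ≤ C₀ + c * (M / (ρ * α) * (3 * h ^ (ρ * α))) := by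
          have hT0 := hC₀ (x : ℝ) x.2
          rw [Real.norm_eq_abs] at hT0
          have := mul_le_mul_of_nonneg_left hIb hc0.le
          linarith
      _ = B := hBdef.symm
  · -- modulus
    have hstep : ∀ u v : X, (u : ℝ) ≤ (v : ℝ) → |g v - g u| ≤ Ω (u : ℝ) (v : ℝ) := by
      intro u v huv
      rw [hgt u, hgt v]
      have h3 := aux_core hρ hα hM0 hφc hφb u.2.1 huv
      have habs : ((v : ℝ) ^ ρ - (u : ℝ) ^ ρ) ^ α = |(v : ℝ) ^ ρ - (u : ℝ) ^ ρ| ^ α := by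
        rw [abs_of_nonneg (sub_nonneg.mpr (Real.rpow_le_rpow u.2.1 huv hρ.le))]
      calc |T (v : ℝ) + c * (∫ s in (0:ℝ)..(v : ℝ),
            ((v : ℝ) ^ ρ - s ^ ρ) ^ (α - 1) * s ^ (ρ - 1) * φ s) -
            (T (u : ℝ) + c * ∫ s in (0:ℝ)..(u : ℝ),
            ((u : ℝ) ^ ρ - s ^ ρ) ^ (α - 1) * s ^ (ρ - 1) * φ s)|
          = |(T (v : ℝ) - T (u : ℝ)) + c * ((∫ s in (0:ℝ)..(v : ℝ),
            ((v : ℝ) ^ ρ - s ^ ρ) ^ (α - 1) * s ^ (ρ - 1) * φ s) -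
            ∫ s in (0:ℝ)..(u : ℝ),
            ((u : ℝ) ^ ρ - s ^ ρ) ^ (α - 1) * s ^ (ρ - 1) * φ s)| := by
            congr 1; ring
        _ ≤ |T (v : ℝ) - T (u : ℝ)| + c * |(∫ s in (0:ℝ)..(v : ℝ),
            ((v : ℝ) ^ ρ - s ^ ρ) ^ (α - 1) * s ^ (ρ - 1) * φ s) -
            ∫ s in (0:ℝ)..(u : ℝ),
            ((u : ℝ) ^ ρ - s ^ ρ) ^ (α - 1) * s ^ (ρ - 1) * φ s| := by
            refine (abs_add_le _ _).trans ?_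
            rw [abs_mul, abs_of_pos hc0]
        _ ≤ |T (v : ℝ) - T (u : ℝ)| + c * (M / (ρ * α) *
            (|(v : ℝ) ^ (ρ * α) - (u : ℝ) ^ (ρ * α)| +
              2 * |(v : ℝ) ^ ρ - (u : ℝ) ^ ρ| ^ α)) := by
            rw [← habs]
            have := mul_le_mul_of_nonneg_left h3 hc0.le
            linarith
        _ = Ω (u : ℝ) (v : ℝ) := by simp only [hΩdef]; ring
    intro u v
    rcases le_total (u : ℝ) (v : ℝ) with huv | huv
    · exact hstep u v huv
    · rw [abs_sub_comm, hΩsymm]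
      exact hstep v u huv
end

section
/- For all y₁, y₂ ∈ U and every x ∈ [0, h], sup_{0 ≤ ω ≤ x} |(Ay₁)(ω) − (Ay₂)(ω)| ≤ (L (x^ρ/ρ)^α / Γ(1+α)) · sup_{0 ≤ ω ≤ x} |y₁(ω) − y₂(ω)|. -/
open Set MeasureTheory intervalIntegral Filter

lemma aux_phi (ρ α ω : ℝ) (hρ : 0 < ρ) (hα : 0 < α) (hω : 0 < ω) :
    IntervalIntegrable (fun t => (ω ^ ρ - t ^ ρ) ^ (α - 1) * t ^ (ρ - 1)) volume 0 ω ∧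
    ∫ t in (0:ℝ)..ω, (ω ^ ρ - t ^ ρ) ^ (α - 1) * t ^ (ρ - 1) = (ω ^ ρ) ^ α / (ρ * α) := by
  set W : ℝ := ω ^ ρ with hWdef
  have hW : 0 < W := Real.rpow_pos_of_pos hω ρ
  set φ : ℝ → ℝ := fun t => (W - t ^ ρ) ^ (α - 1) * t ^ (ρ - 1) with hφdef
  have hder : ∀ t ∈ Ioo (0:ℝ) ω, HasDerivWithinAt (fun s : ℝ => s ^ ρ)
      (ρ * t ^ (ρ - 1)) (Ioo 0 ω) t := fun t ht =>
    (Real.hasDerivAt_rpow_const (Or.inl ht.1.ne')).hasDerivWithinAt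
  have hmono : StrictMonoOn (fun s : ℝ => s ^ ρ) (Ici 0) :=
    fun a ha b _ hab => Real.rpow_lt_rpow ha hab hρ
  have hinj : InjOn (fun s : ℝ => s ^ ρ) (Ioo 0 ω) :=
    hmono.injOn.mono (fun t ht => le_of_lt ht.1)
  have himg : (fun s : ℝ => s ^ ρ) '' Ioo 0 ω = Ioo 0 W := by
    ext u
    constructor
    · rintro ⟨t, ht, rfl⟩
      exact ⟨Real.rpow_pos_of_pos ht.1 ρ, Real.rpow_lt_rpow ht.1.le ht.2 hρ⟩
    · intro hu
      refine ⟨u ^ ρ⁻¹, ⟨Real.rpow_pos_of_pos hu.1 _, ?_⟩, ?_⟩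
      · have : u ^ ρ⁻¹ < W ^ ρ⁻¹ := Real.rpow_lt_rpow hu.1.le hu.2 (by positivity)
        rwa [hWdef, Real.rpow_rpow_inv hω.le hρ.ne'] at this
      · exact Real.rpow_inv_rpow hu.1.le hρ.ne'
  have hrpow : IntervalIntegrable (fun u : ℝ => u ^ (α - 1)) volume 0 W :=
    intervalIntegral.intervalIntegrable_rpow' (by linarith)
  have hWu : IntervalIntegrable (fun u : ℝ => (W - u) ^ (α - 1)) volume 0 W := by
    have := hrpow.comp_sub_left W
    simpa using this.symm
  have hgIoo : IntegrableOn (fun u : ℝ => (W - u) ^ (α - 1)) (Ioo 0 W) :=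
    ((intervalIntegrable_iff_integrableOn_Ioc_of_le hW.le).mp hWu).mono_set
      Ioo_subset_Ioc_self
  have hiff := integrableOn_image_iff_integrableOn_abs_deriv_smul measurableSet_Ioo
      hder hinj (fun u : ℝ => (W - u) ^ (α - 1))
  rw [himg] at hiff
  have h2 : IntegrableOn (fun t : ℝ => |ρ * t ^ (ρ - 1)| • (W - t ^ ρ) ^ (α - 1))
      (Ioo 0 ω) := hiff.mp hgIoo
  have hEq : EqOn (fun t : ℝ => |ρ * t ^ (ρ - 1)| • (W - t ^ ρ) ^ (α - 1))
      (fun t : ℝ => ρ * φ t) (Ioo 0 ω) := by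
    intro t ht
    have h1 : (0:ℝ) ≤ ρ * t ^ (ρ - 1) := mul_nonneg hρ.le (Real.rpow_nonneg ht.1.le _)
    simp only [smul_eq_mul, abs_of_nonneg h1, hφdef]
    ring
  have h3 : IntegrableOn (fun t : ℝ => ρ * φ t) (Ioo 0 ω) :=
    h2.congr_fun hEq measurableSet_Ioo
  have hφIoo : IntegrableOn φ (Ioo 0 ω) := by
    have := h3.const_mul ρ⁻¹
    exact IntegrableOn.congr_fun this (fun t _ => by simp only [← mul_assoc, inv_mul_cancel₀ hρ.ne', one_mul]) measurableSet_Ioo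
  have hφII : IntervalIntegrable φ volume 0 ω := by
    rw [intervalIntegrable_iff_integrableOn_Ioc_of_le hω.le,
      integrableOn_Ioc_iff_integrableOn_Ioo]
    exact hφIoo
  refine ⟨hφII, ?_⟩
  have hval := integral_image_eq_integral_abs_deriv_smul measurableSet_Ioo hder hinj
      (fun u : ℝ => (W - u) ^ (α - 1))
  rw [himg] at hval
  have hrhs : ∫ t in Ioo (0:ℝ) ω, |ρ * t ^ (ρ - 1)| • (W - t ^ ρ) ^ (α - 1) =
      ρ * ∫ t in Ioo (0:ℝ) ω, φ t := by
    rw [setIntegral_congr_fun measurableSet_Ioo hEq, MeasureTheory.integral_const_mul]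
  have hlhs : ∫ u in Ioo (0:ℝ) W, (W - u) ^ (α - 1) = W ^ α / α := by
    rw [← integral_Ioc_eq_integral_Ioo, ← intervalIntegral.integral_of_le hW.le,
      intervalIntegral.integral_comp_sub_left (fun u : ℝ => u ^ (α - 1)) W]
    simp only [sub_self, sub_zero]
    rw [integral_rpow (Or.inl (by linarith))]
    rw [Real.zero_rpow (by linarith : α - 1 + 1 ≠ 0)]
    ring_nf
  have hωint : ∫ t in (0:ℝ)..ω, φ t = ∫ t in Ioo (0:ℝ) ω, φ t := by
    rw [intervalIntegral.integral_of_le hω.le, integral_Ioc_eq_integral_Ioo]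
  rw [hωint]
  have hkey : W ^ α / α = ρ * ∫ t in Ioo (0:ℝ) ω, φ t := by
    rw [← hlhs, hval, hrhs]
  field_simp at hkey ⊢
  linarith [hkey]

theorem stmt13
    (ρ α : ℝ) (hρ : 0 < ρ) (hα : 0 < α)
    (m : ℕ) (hm : m = ⌈α⌉₊)
    (y₀ : ℕ → ℝ) (K hstar : ℝ) (hK : 0 < K) (hhstar : 0 < hstar)
    (T : ℝ → ℝ)
    (hT : ∀ x : ℝ, T x = ∑ k ∈ Finset.range m, x ^ k / (Nat.factorial k) * y₀ k)
    (f : ℝ → ℝ → ℝ)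
    (G : Set (ℝ × ℝ))
    (hG : G = {p : ℝ × ℝ | p.1 ∈ Set.Icc 0 hstar ∧ |p.2 - T p.1| ≤ K})
    (hf : ContinuousOn (fun p : ℝ × ℝ => f p.1 p.2) G)
    (M : ℝ) (hM : M = sSup ((fun p : ℝ × ℝ => |f p.1 p.2|) '' G))
    (h : ℝ)
    (hh : h = if M = 0 then hstar
      else min hstar ((K * Real.Gamma (α + 1) * ρ ^ α / M) ^ (1 / α)))
    (A : (ℝ → ℝ) → ℝ → ℝ)
    (hA : ∀ (y : ℝ → ℝ) (x : ℝ), A y x = T x + ρ ^ (1 - α) / Real.Gamma α *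
      ∫ t in (0:ℝ)..x, (x ^ ρ - t ^ ρ) ^ (α - 1) * t ^ (ρ - 1) * f t (y t))
    (L : ℝ) (hL : 0 < L)
    (hLip : ∀ x y₁ y₂ : ℝ, (x, y₁) ∈ G → (x, y₂) ∈ G → |f x y₁ - f x y₂| ≤ L * |y₁ - y₂|)
    (y₁ y₂ : ℝ → ℝ)
    (hy₁ : ContinuousOn y₁ (Set.Icc 0 h) ∧ ∀ s ∈ Set.Icc 0 h, |y₁ s - T s| ≤ K)
    (hy₂ : ContinuousOn y₂ (Set.Icc 0 h) ∧ ∀ s ∈ Set.Icc 0 h, |y₂ s - T s| ≤ K)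
    (x : ℝ) (hx : x ∈ Set.Icc 0 h) :
    sSup ((fun ω => |A y₁ ω - A y₂ ω|) '' Set.Icc 0 x) ≤
      L * (x ^ ρ / ρ) ^ α / Real.Gamma (1 + α) *
        sSup ((fun ω => |y₁ ω - y₂ ω|) '' Set.Icc 0 x) := by
  obtain ⟨hx0, hxh⟩ := hx
  have hΓα : 0 < Real.Gamma α := Real.Gamma_pos_of_pos hα
  have hΓ1α : 0 < Real.Gamma (1 + α) := Real.Gamma_pos_of_pos (by linarith)
  have hhst : h ≤ hstar := by
    rw [hh]; split_ifs
    · exact le_refl _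
    · exact min_le_left _ _
  have hsub : Icc (0:ℝ) x ⊆ Icc 0 h := Icc_subset_Icc_right hxh
  have hcont12 : ContinuousOn (fun ω => |y₁ ω - y₂ ω|) (Icc 0 x) :=
    ((hy₁.1.mono hsub).sub (hy₂.1.mono hsub)).abs
  have hbddS : BddAbove ((fun ω => |y₁ ω - y₂ ω|) '' Icc 0 x) :=
    (isCompact_Icc.image_of_continuousOn hcont12).bddAbove
  set S := sSup ((fun ω => |y₁ ω - y₂ ω|) '' Icc 0 x) with hSdef
  have hS0 : 0 ≤ S :=
    le_trans (abs_nonneg _) (le_csSup hbddS ⟨0, ⟨le_refl 0, hx0⟩, rfl⟩)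
  have hSb : ∀ t ∈ Icc (0:ℝ) x, |y₁ t - y₂ t| ≤ S := fun t ht => le_csSup hbddS ⟨t, ht, rfl⟩
  have hxρ : (0:ℝ) ≤ (x ^ ρ / ρ) ^ α :=
    Real.rpow_nonneg (div_nonneg (Real.rpow_nonneg hx0 _) hρ.le) _
  have hCnn : 0 ≤ L * (x ^ ρ / ρ) ^ α / Real.Gamma (1 + α) :=
    div_nonneg (mul_nonneg hL.le hxρ) hΓ1α.le
  refine Real.sSup_le ?_ (mul_nonneg hCnn hS0)
  rintro v ⟨ω, hωmem, rfl⟩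
  obtain ⟨hω0, hωx⟩ := hωmem
  rcases eq_or_lt_of_le hω0 with hω | hω
  · subst hω
    simp only [hA, intervalIntegral.integral_same, mul_zero, add_zero, sub_self, abs_zero]
    exact mul_nonneg hCnn hS0
  -- main case : 0 < ω
  have hωh : ω ≤ h := le_trans hωx hxh
  obtain ⟨hφII, hφval⟩ := aux_phi ρ α ω hρ hα hω
  set φ : ℝ → ℝ := fun t => (ω ^ ρ - t ^ ρ) ^ (α - 1) * t ^ (ρ - 1) with hφdef
  have hφnn : ∀ t ∈ Icc (0:ℝ) ω, 0 ≤ φ t := fun t ht =>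
    mul_nonneg (Real.rpow_nonneg
      (sub_nonneg.mpr (Real.rpow_le_rpow ht.1 ht.2 hρ.le)) _) (Real.rpow_nonneg ht.1 _)
  have hGmem : ∀ (y : ℝ → ℝ), (∀ s ∈ Icc (0:ℝ) h, |y s - T s| ≤ K) →
      ∀ t ∈ Icc (0:ℝ) ω, (t, y t) ∈ G := by
    intro y hy t ht
    rw [hG]
    exact ⟨⟨ht.1, le_trans (le_trans ht.2 hωh) hhst⟩, hy t ⟨ht.1, le_trans ht.2 hωh⟩⟩
  have hIccωh : Icc (0:ℝ) ω ⊆ Icc 0 h := Icc_subset_Icc_right hωh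
  have hF : ∀ (y : ℝ → ℝ), ContinuousOn y (Icc 0 h) →
      (∀ s ∈ Icc (0:ℝ) h, |y s - T s| ≤ K) →
      ContinuousOn (fun t => f t (y t)) (Icc 0 ω) := by
    intro y hyc hyK
    exact hf.comp (continuousOn_id.prodMk (hyc.mono hIccωh)) (fun t ht => hGmem y hyK t ht)
  have hF₁ := hF y₁ hy₁.1 hy₁.2
  have hF₂ := hF y₂ hy₂.1 hy₂.2
  -- continuity of φ on the open interval
  have hφcont : ContinuousOn φ (Ioo 0 ω) := by
    intro t ht
    apply ContinuousAt.continuousWithinAt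
    have h1 : ContinuousAt (fun s : ℝ => s ^ ρ) t :=
      Real.continuousAt_rpow_const t ρ (Or.inl ht.1.ne')
    have h2 : ContinuousAt (fun s : ℝ => ω ^ ρ - s ^ ρ) t := continuousAt_const.sub h1
    have hne : ω ^ ρ - t ^ ρ ≠ 0 :=
      (sub_pos.mpr (Real.rpow_lt_rpow ht.1.le ht.2 hρ)).ne'
    have h3 : ContinuousAt (fun s : ℝ => (ω ^ ρ - s ^ ρ) ^ (α - 1)) t :=
      h2.rpow_const (Or.inl hne)
    have h4 : ContinuousAt (fun s : ℝ => s ^ (ρ - 1)) t :=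
      Real.continuousAt_rpow_const t _ (Or.inl ht.1.ne')
    exact h3.mul h4
  have hφIoo : IntegrableOn φ (Ioo 0 ω) := by
    rw [← integrableOn_Ioc_iff_integrableOn_Ioo,
      ← intervalIntegrable_iff_integrableOn_Ioc_of_le hω.le]
    exact hφII
  -- integrability of the products
  have hgint : ∀ (F : ℝ → ℝ) (C : ℝ), ContinuousOn F (Icc 0 ω) →
      (∀ t ∈ Icc (0:ℝ) ω, ‖F t‖ ≤ C) →
      IntervalIntegrable (fun t => φ t * F t) volume 0 ω := by
    intro F C hFc hFb
    rw [intervalIntegrable_iff_integrableOn_Ioc_of_le hω.le,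
      integrableOn_Ioc_iff_integrableOn_Ioo]
    refine Integrable.mono' (hφIoo.const_mul C) ?_ ?_
    · exact (hφcont.mul (hFc.mono Ioo_subset_Icc_self)).aestronglyMeasurable measurableSet_Ioo
    · refine (ae_restrict_iff' measurableSet_Ioo).mpr (Filter.Eventually.of_forall ?_)
      intro t ht
      have ht' : t ∈ Icc (0:ℝ) ω := Ioo_subset_Icc_self ht
      rw [norm_mul, Real.norm_eq_abs (φ t), abs_of_nonneg (hφnn t ht')]
      calc φ t * ‖F t‖ ≤ φ t * C := mul_le_mul_of_nonneg_left (hFb t ht') (hφnn t ht')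
        _ = C * φ t := mul_comm _ _
  obtain ⟨C₁, hC₁⟩ := isCompact_Icc.exists_bound_of_continuousOn hF₁
  obtain ⟨C₂, hC₂⟩ := isCompact_Icc.exists_bound_of_continuousOn hF₂
  have hg₁ := hgint _ C₁ hF₁ hC₁
  have hg₂ := hgint _ C₂ hF₂ hC₂
  -- pointwise bound
  have hptw : ∀ t ∈ Icc (0:ℝ) ω,
      |φ t * f t (y₁ t) - φ t * f t (y₂ t)| ≤ L * S * φ t := by
    intro t ht
    rw [← mul_sub, abs_mul, abs_of_nonneg (hφnn t ht)]
    calc φ t * |f t (y₁ t) - f t (y₂ t)|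
        ≤ φ t * (L * |y₁ t - y₂ t|) := mul_le_mul_of_nonneg_left
            (hLip t _ _ (hGmem y₁ hy₁.2 t ht) (hGmem y₂ hy₂.2 t ht)) (hφnn t ht)
      _ ≤ φ t * (L * S) := mul_le_mul_of_nonneg_left
            (mul_le_mul_of_nonneg_left (hSb t ⟨ht.1, ht.2.trans hωx⟩) hL.le) (hφnn t ht)
      _ = L * S * φ t := by ring
  have hdiff : IntervalIntegrable (fun t => φ t * f t (y₁ t) - φ t * f t (y₂ t))
      volume 0 ω := hg₁.sub hg₂
  have key : |(∫ t in (0:ℝ)..ω, φ t * f t (y₁ t)) - ∫ t in (0:ℝ)..ω, φ t * f t (y₂ t)|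
      ≤ L * S * ((ω ^ ρ) ^ α / (ρ * α)) := by
    rw [← intervalIntegral.integral_sub hg₁ hg₂]
    calc |∫ t in (0:ℝ)..ω, (φ t * f t (y₁ t) - φ t * f t (y₂ t))|
        ≤ ∫ t in (0:ℝ)..ω, |φ t * f t (y₁ t) - φ t * f t (y₂ t)| :=
          intervalIntegral.abs_integral_le_integral_abs hω.le
      _ ≤ ∫ t in (0:ℝ)..ω, L * S * φ t := intervalIntegral.integral_mono_on hω.le
          hdiff.abs (hφII.const_mul _) hptw
      _ = L * S * ((ω ^ ρ) ^ α / (ρ * α)) := by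
          rw [intervalIntegral.integral_const_mul, hφval]
  -- assemble
  show |A y₁ ω - A y₂ ω| ≤ L * (x ^ ρ / ρ) ^ α / Real.Gamma (1 + α) * S
  have hAeq : A y₁ ω - A y₂ ω = ρ ^ (1 - α) / Real.Gamma α *
      ((∫ t in (0:ℝ)..ω, φ t * f t (y₁ t)) - ∫ t in (0:ℝ)..ω, φ t * f t (y₂ t)) := by
    rw [hA, hA]
    simp only [hφdef]
    ring
  have hc : (0:ℝ) ≤ ρ ^ (1 - α) / Real.Gamma α :=
    div_nonneg (Real.rpow_nonneg hρ.le _) hΓα.le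
  rw [hAeq, abs_mul, abs_of_nonneg hc]
  have step1 : ρ ^ (1 - α) / Real.Gamma α *
      |(∫ t in (0:ℝ)..ω, φ t * f t (y₁ t)) - ∫ t in (0:ℝ)..ω, φ t * f t (y₂ t)| ≤
      ρ ^ (1 - α) / Real.Gamma α * (L * S * ((ω ^ ρ) ^ α / (ρ * α))) :=
    mul_le_mul_of_nonneg_left key hc
  have halg : ρ ^ (1 - α) / Real.Gamma α * (L * S * ((ω ^ ρ) ^ α / (ρ * α))) =
      L * (ω ^ ρ / ρ) ^ α / Real.Gamma (1 + α) * S := by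
    have hΓ : Real.Gamma (1 + α) = α * Real.Gamma α := by
      rw [add_comm, Real.Gamma_add_one hα.ne']
    have hρpow : ρ ^ (1 - α) = ρ / ρ ^ α := by
      rw [Real.rpow_sub hρ, Real.rpow_one]
    have hdivpow : (ω ^ ρ / ρ) ^ α = (ω ^ ρ) ^ α / ρ ^ α :=
      Real.div_rpow (Real.rpow_nonneg hω.le ρ) hρ.le α
    have hρα : (0:ℝ) < ρ ^ α := Real.rpow_pos_of_pos hρ _
    rw [hΓ, hρpow, hdivpow]
    field_simp
  rw [halg] at step1
  refine le_trans step1 ?_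
  have hmon : (ω ^ ρ / ρ) ^ α ≤ (x ^ ρ / ρ) ^ α := by
    have h1 : ω ^ ρ ≤ x ^ ρ := Real.rpow_le_rpow hω.le hωx hρ.le
    have h2 : (0:ℝ) ≤ ω ^ ρ / ρ := div_nonneg (Real.rpow_nonneg hω.le _) hρ.le
    gcongr <;> assumption
  have hfinal : L * (ω ^ ρ / ρ) ^ α / Real.Gamma (1 + α) ≤
      L * (x ^ ρ / ρ) ^ α / Real.Gamma (1 + α) := by gcongr
  exact mul_le_mul_of_nonneg_right hfinal hS0
end
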